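/- arXiv:0801.2378 — 15 statements merged into one kernel-verified Lean document; each statement's English description precedes it below -/
import Mathlib

section
/- Let α be a linearly ordered type, let P and Q be lists over α, and let # be an element of α such that c < # for every character c occurring in Q. Then P is a prefix of Q if and only if P ≤_lex Q and Q <_lex P ++ [#]. -/
/-- **Manber–Myers observation.**  Let `α` be a linearly ordered type, `P Q : List α`, and
`hash : α` strictly larger than every character occurring in `Q`.  Then `P` is a prefix of `Q`
iff `P ≤_lex Q` and `Q <_lex P ++ [hash]`, where `<_lex` is the lexicographic order
`List.Lex (· < ·)` (under which a proper prefix is strictly smaller). -/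
theorem stmt0 {α : Type*} [LinearOrder α] (P Q : List α) (hash : α)
    (hhash : ∀ c ∈ Q, c < hash) :
    P <+: Q ↔
      ((List.Lex (· < ·) P Q ∨ P = Q) ∧ List.Lex (· < ·) Q (P ++ [hash])) := by
  induction P generalizing Q with
  | nil =>
    simp only [List.nil_prefix, true_iff, List.nil_append]
    constructor
    · cases Q with
      | nil => exact Or.inr rfl
      | cons q Q' => exact Or.inl List.Lex.nil
    · cases Q with
      | nil => exact List.Lex.nil
      | cons q Q' => exact List.Lex.rel (hhash q (by simp))
  | cons p P' ih =>
    cases Q with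
    | nil =>
      constructor
      · intro h
        exact absurd (List.prefix_nil.mp h) (by simp)
      · rintro ⟨h1, -⟩
        rcases h1 with h | h
        · cases h
        · exact absurd h (by simp)
    | cons q Q' =>
      rw [List.cons_prefix_cons]
      constructor
      · rintro ⟨rfl, hpre⟩
        obtain ⟨h1, h2⟩ :=
          (ih Q' (fun c hc => hhash c (List.mem_cons_of_mem _ hc))).mp hpre
        refine ⟨?_, List.Lex.cons h2⟩
        rcases h1 with h | h
        · exact Or.inl (List.Lex.cons h)
        · exact Or.inr (by rw [h])
      · rintro ⟨h1, h2⟩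
        cases h2 with
        | rel hqp =>
          rcases h1 with h | h
          · cases h with
            | rel hpq => exact absurd hqp (not_lt.mpr hpq.le)
            | cons _ => exact absurd hqp (lt_irrefl _)
          · injection h with h h'
            exact absurd hqp (by rw [h]; exact lt_irrefl _)
        | cons h2' =>
          refine ⟨rfl, ?_⟩
          have h1' : List.Lex (· < ·) P' Q' ∨ P' = Q' := by
            rcases h1 with h | h
            · cases h with
              | rel hpq => exact absurd hpq (lt_irrefl _)
              | cons h => exact Or.inl h
            · injection h with h h'
              exact Or.inr h'
          exact (ih Q' (fun c hc => hhash c (List.mem_cons_of_mem _ hc))).mpr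
            ⟨h1', h2'⟩
end

section
/- Let α be a linearly ordered type and let P, A, B, C be lists over α. If P is a prefix of A, P is a prefix of C, and A ≤_lex B ≤_lex C, then P is a prefix of B. Consequently, in any lexicographically sorted list of strings, the strings having P as a prefix occupy a contiguous interval of positions. -/
/-- Let `α` be a linearly ordered type and `P A B C : List α`.  If `P` is a prefix of `A`,
`P` is a prefix of `C`, and `A ≤_lex B ≤_lex C` (lexicographic order, under which a proper
prefix is smaller), then `P` is a prefix of `B`.  Hence in a lexicographically sorted list
of strings, the strings having `P` as a prefix occupy a contiguous interval. -/
theorem stmt1 {α : Type*} [LinearOrder α] (P A B C : List α)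
    (hA : P <+: A) (hC : P <+: C)
    (hAB : List.Lex (· < ·) A B ∨ A = B)
    (hBC : List.Lex (· < ·) B C ∨ B = C) :
    P <+: B := by
  induction P generalizing A B C with
  | nil => exact List.nil_prefix
  | cons p P ih =>
    rcases hAB with hAB | rfl; swap
    · exact hA
    rcases hBC with hBC | rfl; swap
    · exact hC
    obtain ⟨A', rfl⟩ := hA
    obtain ⟨C', rfl⟩ := hC
    cases B with
    | nil => exact absurd hAB (by intro h; cases h)
    | cons b B =>
      cases hAB with
      | rel h1 =>
        cases hBC with
        | rel h2 => exact absurd (h1.trans h2) (lt_irrefl p)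
        | cons h2 => exact absurd h1 (lt_irrefl p)
      | cons h1 =>
        cases hBC with
        | rel h2 => exact absurd h2 (lt_irrefl p)
        | cons h2 =>
          exact List.cons_prefix_cons.mpr ⟨rfl, ih _ _ _ (List.prefix_append _ _) (List.prefix_append _ _)
            (Or.inl h1) (Or.inl h2)⟩
end

section
/- Let S be a list of length n ≥ 1 over a linearly ordered type α, and let M be the list of the n rotations rot 0 S, …, rot (n−1) S arranged in nondecreasing lexicographic order. Then the list L of last characters of the rows of M is a permutation of S, i.e., the multiset of elements of L equals the multiset of elements of S. -/
/-- `rot i S` is the `i`-th rotation `(S.drop i) ++ (S.take i)` of the list `S`. -/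
def rot {α : Type*} (i : ℕ) (S : List α) : List α := S.drop i ++ S.take i

/-- Nonstrict lexicographic order on lists (a proper prefix is smaller). -/
def lexLe {α : Type*} [LinearOrder α] (u v : List α) : Prop :=
  List.Lex (· < ·) u v ∨ u = v

lemma myGetLast! {α : Type*} [Inhabited α] (l : List α) (h : l ≠ []) :
    l.getLast! = l.getLast h :=
  List.getLast!_of_getLast? (List.getLast?_eq_getLast h)

lemma key_bwt {α : Type*} [Inhabited α] (S : List α) (hS : 1 ≤ S.length) :
    (List.range S.length).map (fun i => (rot i S).getLast!) =
      S.getLast! :: S.dropLast := by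
  have hne : S ≠ [] := by intro h; simp [h] at hS
  apply List.ext_getElem
  · simp; omega
  · intro i h1 h2
    rw [List.length_map, List.length_range] at h1
    simp only [List.getElem_map, List.getElem_range]
    rcases Nat.eq_zero_or_pos i with rfl | hi
    · rw [List.getElem_cons_zero]
      unfold rot
      simp [myGetLast! _ hne]
    · have htake : S.take i ≠ [] := by
        apply List.ne_nil_of_length_pos
        rw [List.length_take]; omega
      rw [List.getElem_cons, dif_neg (by omega : ¬ i = 0)]
      rw [rot, myGetLast! _ (by simp [htake])]
      rw [List.getLast_append]
      rw [dif_neg (by simpa using htake)]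
      rw [List.getLast_eq_getElem, List.getElem_take, List.getElem_dropLast]
      congr 1
      rw [List.length_take]; omega

/-- Let `S` be a list of length `n ≥ 1` and let `M` be the list of the `n` rotations
`rot 0 S, …, rot (n-1) S` arranged in nondecreasing lexicographic order.  Then the list
`L` of last characters of the rows of `M` is a permutation of `S`. -/
theorem stmt3 {α : Type*} [LinearOrder α] [Inhabited α]
    (S : List α) (hS : 1 ≤ S.length)
    (M : List (List α))
    (hperm : List.Perm M ((List.range S.length).map (fun i => rot i S)))
    (hsorted : M.Pairwise lexLe) :
    List.Perm (M.map (fun r => r.getLast!)) S := by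
  have hne : S ≠ [] := by intro h; simp [h] at hS
  have h1 : List.Perm (M.map (fun r => r.getLast!))
      (((List.range S.length).map (fun i => rot i S)).map (fun r => r.getLast!)) :=
    hperm.map _
  rw [List.map_map] at h1
  rw [show ((fun r : List α => r.getLast!) ∘ fun i => rot i S)
      = fun i => (rot i S).getLast! from rfl] at h1
  rw [key_bwt S hS] at h1
  refine h1.trans ?_
  have h2 := List.perm_append_singleton S.getLast! S.dropLast
  refine h2.symm.trans ?_
  rw [myGetLast! _ hne, List.dropLast_append_getLast hne]
end

section
/- Let S be a list of length n ≥ 1 over a linearly ordered type α, and let M be the list of the n rotations rot 0 S, …, rot (n−1) S arranged in nondecreasing lexicographic order. Then the list F of first characters of the rows of M equals the list of the characters of S sorted in nondecreasing order. -/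
lemma rot_length {α : Type*} (i : ℕ) (S : List α) : (rot i S).length = S.length := by
  simp [rot]; omega

lemma head!_rot {α : Type*} [Inhabited α] (S : List α) (i : ℕ) (h : i < S.length) :
    (rot i S).head! = S.get ⟨i, h⟩ := by
  have hd : S.drop i ≠ [] := by
    intro he
    have := congrArg List.length he
    simp at this; omega
  rw [rot, List.head!_eq_head?, List.head?_append_of_ne_nil _ hd,
    List.head?_eq_head hd, List.head_drop]
  rfl

lemma lexLe_head! {α : Type*} [LinearOrder α] [Inhabited α] {u v : List α}
    (hu : u ≠ []) (hv : v ≠ []) (h : lexLe u v) : u.head! ≤ v.head! := by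
  obtain ⟨a, u', rfl⟩ := List.exists_cons_of_ne_nil hu
  obtain ⟨b, v', rfl⟩ := List.exists_cons_of_ne_nil hv
  rcases h with h | h
  · cases h with
    | cons _ => simp
    | rel h => simpa using le_of_lt h
  · simp [List.cons.injEq] at h
    simp [h.1]

/-- Let `S` be a list of length `n ≥ 1` and let `M` be the list of the `n` rotations of `S`
arranged in nondecreasing lexicographic order.  Then the list `F` of first characters of the
rows of `M` equals the list of the characters of `S` sorted in nondecreasing order, i.e. `F`
is a nondecreasingly sorted permutation of `S`. -/
theorem stmt4 {α : Type*} [LinearOrder α] [Inhabited α]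
    (S : List α) (hS : 1 ≤ S.length)
    (M : List (List α))
    (hperm : List.Perm M ((List.range S.length).map (fun i => rot i S)))
    (hsorted : M.Pairwise lexLe) :
    (M.map (fun r => r.head!)).Pairwise (· ≤ ·) ∧
      List.Perm (M.map (fun r => r.head!)) S := by
  have hne : ∀ u ∈ M, u ≠ [] := by
    intro u hu
    have := hperm.mem_iff.mp hu
    simp only [List.mem_map, List.mem_range] at this
    obtain ⟨i, hi, rfl⟩ := this
    intro he
    have := congrArg List.length he
    rw [rot_length, List.length_nil] at this
    omega
  constructor
  · exact List.Pairwise.map _ (fun a b h => h)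
      (hsorted.imp_of_mem (fun hu hv h => lexLe_head! (hne _ hu) (hne _ hv) h))
  · refine (hperm.map _).trans ?_
    rw [List.map_map]
    have : ((List.range S.length).map ((fun r => r.head!) ∘ fun i => rot i S)) = S := by
      apply List.ext_get
      · simp
      · intro n h1 h2
        simp only [List.get_eq_getElem, List.getElem_map, List.getElem_range, Function.comp]
        simp at h1
        rw [head!_rot S n h1, List.get_eq_getElem]
    rw [this]
end

section
/- Let α be a linearly ordered type and # an element of α. Let T₁ and T₂ be lists over α all of whose characters are strictly greater than #. If the Burrows–Wheeler transforms of T₁ ++ [#] and T₂ ++ [#] are equal as lists (i.e., the lists of last characters of the lexicographically sorted rotations of T₁ ++ [#] and of T₂ ++ [#] coincide), then T₁ = T₂. -/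
namespace BWTaux

lemma rot_length {α : Type*} (i : ℕ) (S : List α) : (rot i S).length = S.length := by
  simp [rot]; omega

lemma rot_eq_rotate {α : Type*} {i : ℕ} {S : List α} (h : i ≤ S.length) :
    rot i S = S.rotate i :=
  (List.rotate_eq_drop_append_take h).symm

lemma lexLe_antisymm {α : Type*} [LinearOrder α] :
    ∀ (u v : List α), lexLe u v → lexLe v u → u = v := by
  intro u v h1 h2
  rcases h2 with h2 | h2
  · rcases h1 with h1 | h1
    · exact absurd h2 (asymm h1)
    · exact h1
  · exact h2.symm

instance {α : Type*} [LinearOrder α] : IsAntisymm (List α) lexLe := ⟨lexLe_antisymm⟩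

lemma lexLe_nil {α : Type*} [LinearOrder α] (l : List α) : lexLe [] l := by
  cases l with
  | nil => exact Or.inr rfl
  | cons a t => exact Or.inl List.Lex.nil

lemma lex_take {α : Type*} [LinearOrder α] (k : ℕ) {u v : List α}
    (h : List.Lex (· < ·) u v) : lexLe (u.take k) (v.take k) := by
  induction h generalizing k with
  | nil => simp only [List.take_nil]; exact lexLe_nil _
  | @cons a u' v' h ih =>
    cases k with
    | zero => exact Or.inr rfl
    | succ m =>
      rcases ih m with h' | h'
      · exact Or.inl (List.Lex.cons h')
      · exact Or.inr (by simp [List.take_succ_cons, h'])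
  | @rel u' a v' b hab =>
    cases k with
    | zero => exact Or.inr rfl
    | succ m => exact Or.inl (List.Lex.rel hab)

lemma lexLe_take {α : Type*} [LinearOrder α] (k : ℕ) {u v : List α} (h : lexLe u v) :
    lexLe (u.take k) (v.take k) := by
  rcases h with h | h
  · exact lex_take k h
  · exact Or.inr (by rw [h])

lemma sigma_perm (n : ℕ) :
    ((List.range n).map (fun i => (i + 1) % n)).Perm (List.range n) := by
  rcases Nat.eq_zero_or_pos n with rfl | hn
  · simp
  have hmap : (List.range n).map (fun i => (i + 1) % n) = (List.range n).rotate 1 := by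
    apply List.ext_getElem
    · simp
    · intro i h1 h2
      simp only [List.getElem_map, List.getElem_range]
      rw [List.getElem_rotate]
      simp
  rw [hmap]
  exact List.rotate_perm _ 1

lemma step' {α : Type*} [Inhabited α] (W : List α) (hW : W ≠ []) {k : ℕ}
    (hk : k < W.length) :
    W.take (k + 1) = (W.rotate 1).getLast! :: (W.rotate 1).take k := by
  obtain ⟨a, t, rfl⟩ := List.exists_cons_of_ne_nil hW
  rw [show (1 : ℕ) = 0 + 1 from rfl, List.rotate_cons_succ, List.rotate_zero]
  have hlast : (t ++ [a]).getLast! = a := List.getLast!_of_getLast? List.getLast?_concat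
  have htk : (t ++ [a]).take k = t.take k := by
    apply List.take_append_of_le_length
    simp at hk; omega
  rw [hlast, htk]
  rfl

lemma step {α : Type*} [Inhabited α] (S : List α) {i k : ℕ} (hi : i < S.length)
    (hk : k < S.length) :
    (rot i S).take (k + 1)
      = (rot ((i + 1) % S.length) S).getLast! :: (rot ((i + 1) % S.length) S).take k := by
  have hn : 0 < S.length := by omega
  rw [rot_eq_rotate hi.le, rot_eq_rotate (Nat.mod_lt _ hn).le,
    List.rotate_mod, ← List.rotate_rotate]
  apply step'
  · exact List.ne_nil_of_length_pos (by rw [List.length_rotate]; omega)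
  · rw [List.length_rotate]; exact hk

/-- The key permutation: `(k+1)`-prefixes of all rotations are, up to permutation,
the last characters prepended to the `k`-prefixes, over all rotations. -/
lemma key_perm {α : Type*} [Inhabited α] (S : List α) {k : ℕ} (hk : k < S.length) :
    (((List.range S.length).map (fun i => rot i S)).map (fun r => r.take (k + 1))).Perm
    (((List.range S.length).map (fun i => rot i S)).map
        (fun r => r.getLast! :: r.take k)) := by
  set n := S.length with hn
  set g : ℕ → List α := fun j => (rot j S).getLast! :: (rot j S).take k with hg
  rw [List.map_map, List.map_map]
  have h1 : (List.range n).map ((fun r : List α => r.take (k + 1)) ∘ (fun i => rot i S))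
      = ((List.range n).map (fun i => (i + 1) % n)).map g := by
    rw [List.map_map]
    apply List.map_congr_left
    intro i hi
    rw [List.mem_range] at hi
    exact step S hi hk
  rw [h1]
  exact (sigma_perm n).map g

lemma map_cons_of_maps {β γ : Type*} (g : β → γ) (h : β → List γ) {L₁ L₂ : List β}
    (e1 : L₁.map g = L₂.map g) (e2 : L₁.map h = L₂.map h) :
    L₁.map (fun r => g r :: h r) = L₂.map (fun r => g r :: h r) := by
  induction L₁ generalizing L₂ with
  | nil => cases L₂ <;> simp_all
  | cons a t ih =>
    cases L₂ with
    | nil => simp_all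
    | cons b u =>
      simp only [List.map_cons, List.cons.injEq] at *
      exact ⟨⟨e1.1, e2.1⟩, ih e1.2 e2.2⟩

lemma sorted_map_take {α : Type*} [LinearOrder α] (k : ℕ) {M : List (List α)}
    (hs : M.Pairwise lexLe) : (M.map (fun r => r.take k)).Pairwise lexLe := by
  rw [List.pairwise_map]
  exact hs.imp (lexLe_take k)

end BWTaux

/-- **Invertibility of the Burrows–Wheeler transform with a sentinel.**
Let `hash` be strictly smaller than every character of the lists `T₁` and `T₂`.
Let `Mᵢ` be the lexicographically sorted list of all rotations of `Tᵢ ++ [hash]`.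
If the lists of last characters of the rows of `M₁` and of `M₂` (the Burrows–Wheeler
transforms) coincide, then `T₁ = T₂`. -/
theorem stmt5 {α : Type*} [LinearOrder α] [Inhabited α] (hash : α)
    (T₁ T₂ : List α)
    (h₁ : ∀ c ∈ T₁, hash < c) (h₂ : ∀ c ∈ T₂, hash < c)
    (M₁ M₂ : List (List α))
    (hperm₁ : List.Perm M₁ ((List.range (T₁ ++ [hash]).length).map
      (fun i => rot i (T₁ ++ [hash]))))
    (hsorted₁ : M₁.Pairwise lexLe)
    (hperm₂ : List.Perm M₂ ((List.range (T₂ ++ [hash]).length).map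
      (fun i => rot i (T₂ ++ [hash]))))
    (hsorted₂ : M₂.Pairwise lexLe)
    (heq : M₁.map (fun r => r.getLast!) = M₂.map (fun r => r.getLast!)) :
    T₁ = T₂ := by
  classical
  set S₁ := T₁ ++ [hash] with hS₁
  set S₂ := T₂ ++ [hash] with hS₂
  have hn1 : 0 < S₁.length := by simp [hS₁]
  have hlen12 : M₁.length = M₂.length := by
    have := congrArg List.length heq; simpa using this
  have hlen1 : M₁.length = S₁.length := by simpa using hperm₁.length_eq
  have hlen2' : M₂.length = S₂.length := by simpa using hperm₂.length_eq
  have hnn : S₂.length = S₁.length := by omega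
  set n := S₁.length with hn
  have hrow1 : ∀ r ∈ M₁, r.length = n := by
    intro r hr
    have := hperm₁.mem_iff.mp hr
    simp only [List.mem_map, List.mem_range] at this
    obtain ⟨i, _, rfl⟩ := this
    exact BWTaux.rot_length i S₁
  have hrow2 : ∀ r ∈ M₂, r.length = n := by
    intro r hr
    have := hperm₂.mem_iff.mp hr
    simp only [List.mem_map, List.mem_range] at this
    obtain ⟨i, _, rfl⟩ := this
    rw [BWTaux.rot_length i S₂, hnn]
  have main : ∀ k, k ≤ n → M₁.map (fun r => r.take k) = M₂.map (fun r => r.take k) := by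
    intro k
    induction k with
    | zero =>
      intro _
      simp only [List.take_zero]
      rw [List.map_const', List.map_const', hlen12]
    | succ k ih =>
      intro hk
      have hk' : k < n := by omega
      have ihk := ih (by omega)
      have hmid : M₁.map (fun r => r.getLast! :: r.take k)
          = M₂.map (fun r => r.getLast! :: r.take k) :=
        BWTaux.map_cons_of_maps _ _ heq ihk
      have p1 : (M₁.map (fun r => r.take (k + 1))).Perm
          (M₁.map (fun r => r.getLast! :: r.take k)) :=
        ((hperm₁.map _).trans (BWTaux.key_perm S₁ (by omega))).trans (hperm₁.map _).symm
      have p2 : (M₂.map (fun r => r.take (k + 1))).Perm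
          (M₂.map (fun r => r.getLast! :: r.take k)) :=
        ((hperm₂.map _).trans (BWTaux.key_perm S₂ (by omega))).trans (hperm₂.map _).symm
      have ptot : (M₁.map (fun r => r.take (k + 1))).Perm
          (M₂.map (fun r => r.take (k + 1))) :=
        (p1.trans (hmid ▸ List.Perm.refl _)).trans p2.symm
      exact List.Perm.eq_of_pairwise (fun a b _ _ => BWTaux.lexLe_antisymm a b) (BWTaux.sorted_map_take _ hsorted₁)
        (BWTaux.sorted_map_take _ hsorted₂) ptot
  have hMeq : M₁ = M₂ := by
    have h := main n le_rfl
    have e1 : M₁.map (fun r => r.take n) = M₁ := by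
      conv_rhs => rw [← List.map_id M₁]
      apply List.map_congr_left
      intro r hr
      exact List.take_of_length_le (le_of_eq (hrow1 r hr))
    have e2 : M₂.map (fun r => r.take n) = M₂ := by
      conv_rhs => rw [← List.map_id M₂]
      apply List.map_congr_left
      intro r hr
      exact List.take_of_length_le (le_of_eq (hrow2 r hr))
    rw [← e1, ← e2, h]
  -- S₂ is a rotation of S₁
  have hS2mem : S₂ ∈ (List.range n).map (fun i => rot i S₁) := by
    have h0 : S₂ ∈ (List.range S₂.length).map (fun i => rot i S₂) := by
      have : rot 0 S₂ = S₂ := by simp [rot]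
      refine List.mem_map.mpr ⟨0, ?_, this⟩
      rw [List.mem_range]; omega
    exact hperm₁.mem_iff.mp (hperm₂.mem_iff.mpr h0 |> (hMeq ▸ ·))
  simp only [List.mem_map, List.mem_range] at hS2mem
  obtain ⟨i, hi, hrot⟩ := hS2mem
  rcases Nat.eq_zero_or_pos i with rfl | hipos
  · have : S₂ = S₁ := by rw [← hrot]; simp [rot]
    rw [hS₁, hS₂] at this
    exact (List.append_cancel_right this).symm
  · exfalso
    have hiT : i ≤ T₁.length := by
      have h5 : S₁.length = T₁.length + 1 := by simp [hS₁]
      omega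
    have htake : S₁.take i = T₁.take i := by
      rw [hS₁]; exact List.take_append_of_le_length hiT
    have htne : T₁.take i ≠ [] := by
      have hlt : (T₁.take i).length = i := by rw [List.length_take]; omega
      intro h
      rw [h] at hlt
      simp at hlt
      omega
    have hlast2 : S₂.getLast? = some hash := by rw [hS₂]; exact List.getLast?_concat
    have hlast1 : (rot i S₁).getLast? = (T₁.take i).getLast? := by
      rw [rot, htake]
      exact List.getLast?_append_of_ne_nil _ htne
    rw [← hrot, hlast1] at hlast2
    have hmem : hash ∈ T₁.take i := List.mem_of_getLast? hlast2
    have : hash ∈ T₁ := List.take_subset i T₁ hmem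
    exact lt_irrefl hash (h₁ hash this)
end

section
/- Let S be a list of length n over a linearly ordered type α whose n rotations are pairwise distinct, and let M be the list of the n rotations sorted in increasing lexicographic order, with rows indexed 1,…,n. If 1 ≤ i < j ≤ n and the rows M[i] and M[j] have the same last character, then the right cyclic shift of M[i] (obtained by moving its last character to the front) is lexicographically strictly smaller than the right cyclic shift of M[j]. In other words, rotations ending with the same character appear in the same relative order before and after the shift. -/
/-- The right cyclic shift of a list: its last character is moved to the front. -/
def rshift {α : Type*} [Inhabited α] (r : List α) : List α :=
  r.getLast! :: r.dropLast

lemma lex_append_singleton {α : Type*} [LT α] :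
    ∀ {a b : List α} (_ : a.length = b.length) (c : α),
      List.Lex (· < ·) (a ++ [c]) (b ++ [c]) → List.Lex (· < ·) a b ∨ a = b
  | [], [], _, _, _ => Or.inr rfl
  | [], _ :: _, h, _, _ => by simp at h
  | _ :: _, [], h, _, _ => by simp at h
  | x :: a, y :: b, h, c, hlex => by
    simp only [List.cons_append] at hlex
    cases hlex with
    | rel hr => exact Or.inl (List.Lex.rel hr)
    | cons ht =>
      rcases lex_append_singleton (by simpa using h) c ht with h' | h'
      · exact Or.inl (List.Lex.cons h')
      · exact Or.inr (by rw [h'])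

/-- **Order preservation of the LF-mapping.**  Let `S` be a list whose rotations are pairwise
distinct, and let `M` be the list of the rotations of `S` sorted in (strictly) increasing
lexicographic order.  If rows `M[i]` and `M[j]` with `i < j` have the same last character,
then the right cyclic shift of `M[i]` is lexicographically strictly smaller than the right
cyclic shift of `M[j]`. -/
theorem stmt6 {α : Type*} [LinearOrder α] [Inhabited α] (S : List α)
    (M : List (List α))
    (hnodup : ((List.range S.length).map (fun i => rot i S)).Nodup)
    (hperm : List.Perm M ((List.range S.length).map (fun i => rot i S)))
    (hsorted : M.Pairwise (List.Lex (· < ·)))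
    (i j : Fin M.length) (hij : i < j)
    (hlast : (M.get i).getLast! = (M.get j).getLast!) :
    List.Lex (· < ·) (rshift (M.get i)) (rshift (M.get j)) := by
  have hMnd : M.Nodup := hperm.nodup_iff.mpr (hnodup)
  -- lengths of all elements of M equal S.length
  have hlen : ∀ r ∈ M, r.length = S.length := by
    intro r hr
    have := hperm.mem_iff.mp hr
    simp only [List.mem_map, List.mem_range] at this
    obtain ⟨k, hk, rfl⟩ := this
    simp [rot]; omega
  have hMpos : 0 < M.length := lt_of_le_of_lt (Nat.zero_le _) j.isLt
  have hSpos : 0 < S.length := by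
    have := hperm.length_eq
    simpa using hMpos.trans_eq (this.trans (by simp))
  have hi : M.get i ∈ M := List.get_mem M i
  have hj : M.get j ∈ M := List.get_mem M j
  have hine : M.get i ≠ [] := by
    intro h; have := hlen _ hi; rw [h] at this; simp at this; omega
  have hjne : M.get j ≠ [] := by
    intro h; have := hlen _ hj; rw [h] at this; simp at this; omega
  have hgi : (M.get i).getLast! = (M.get i).getLast hine :=
    List.getLast!_of_getLast? (List.getLast?_eq_getLast hine)
  have hgj : (M.get j).getLast! = (M.get j).getLast hjne :=
    List.getLast!_of_getLast? (List.getLast?_eq_getLast hjne)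
  have hdi : (M.get i).dropLast ++ [(M.get i).getLast!] = M.get i := by
    rw [hgi]; exact List.dropLast_append_getLast hine
  have hdj : (M.get j).dropLast ++ [(M.get j).getLast!] = M.get j := by
    rw [hgj]; exact List.dropLast_append_getLast hjne
  have hlex : List.Lex (· < ·) (M.get i) (M.get j) :=
    List.pairwise_iff_get.mp hsorted i j hij
  have hne : M.get i ≠ M.get j := fun h =>
    absurd (List.Nodup.get_inj_iff hMnd |>.mp h) (Fin.ne_of_lt hij)
  rw [← hdi, ← hdj, hlast] at hlex
  have hlen' : (M.get i).dropLast.length = (M.get j).dropLast.length := by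
    have h1 := hlen _ hi
    have h2 := hlen _ hj
    simp only [List.length_dropLast, h1, h2]
  rcases lex_append_singleton hlen' _ hlex with h' | h'
  · unfold rshift
    rw [hlast]
    exact List.Lex.cons h'
  · exfalso; apply hne
    rw [← hdi, ← hdj, h', hlast]
end

section
/- Let S be a list of length n over a linearly ordered type α in which some character occurs exactly once (so that the n rotations of S are pairwise distinct), and let M be the list of the n rotations sorted in increasing lexicographic order, rows indexed 1,…,n. Let L i be the last character of row M[i]; for a character c let C(c) be the number of positions of S holding a character strictly smaller than c, and let Occ(c,i) be the number of indices j with 1 ≤ j ≤ i and L j = c. Then for every row index 1 ≤ i ≤ n, the right cyclic shift of M[i] (its last character moved to the front) equals row M[C(L i) + Occ(L i, i)]. -/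
set_option linter.unusedSectionVars false
set_option maxHeartbeats 1000000
open List


section helpers
variable {α : Type*} [LinearOrder α] [Inhabited α]

lemma getLast!_eq {l : List α} (h : l ≠ []) : l.getLast! = l.getLast h :=
  List.getLast!_of_getLast? (List.getLast?_eq_getLast h)

lemma rshift_concat (x : List α) (a : α) : rshift (x ++ [a]) = a :: x := by
  rw [rshift, getLast!_eq (by simp)]
  simp [List.getLast_append]

lemma rshift_eq_rotate {l : List α} (h : l ≠ []) : rshift l = l.rotate (l.length - 1) := by
  obtain ⟨x, a, rfl⟩ := (List.eq_nil_or_concat l).resolve_left h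
  rw [List.concat_eq_append, rshift_concat, List.rotate_eq_drop_append_take (by simp)]
  simp

lemma rshift_rotate (S : List α) (hn : 0 < S.length) (k : ℕ) :
    rshift (S.rotate k) = S.rotate (k + (S.length - 1)) := by
  have h1 : S.rotate k ≠ [] := by
    rw [← List.length_pos_iff, List.length_rotate]; omega
  rw [rshift_eq_rotate h1, List.length_rotate, List.rotate_rotate]

lemma lex_cons_iff' {a b : α} {u v : List α} :
    List.Lex (· < ·) (a :: u) (b :: v) ↔ a < b ∨ (a = b ∧ List.Lex (· < ·) u v) := by
  constructor
  · intro h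
    cases h with
    | rel h => exact Or.inl h
    | cons h => exact Or.inr ⟨rfl, h⟩
  · rintro (h | ⟨rfl, h⟩)
    · exact List.Lex.rel h
    · exact List.Lex.cons h

lemma lex_append_iff : ∀ {x y : List α}, x.length = y.length → ∀ {u v : List α},
    (List.Lex (· < ·) (x ++ u) (y ++ v) ↔ List.Lex (· < ·) x y ∨ (x = y ∧ List.Lex (· < ·) u v))
  | [], [], _, u, v => by simp [List.not_lex_nil]
  | a :: x, b :: y, h, u, v => by
    simp only [List.cons_append, lex_cons_iff']
    rw [lex_append_iff (by simpa using h)]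
    constructor
    · rintro (hab | ⟨rfl, (hxy | ⟨rfl, huv⟩)⟩)
      · exact Or.inl (Or.inl hab)
      · exact Or.inl (Or.inr ⟨rfl, hxy⟩)
      · exact Or.inr ⟨rfl, huv⟩
    · rintro ((hab | ⟨rfl, hxy⟩) | ⟨heq, huv⟩)
      · exact Or.inl hab
      · exact Or.inr ⟨rfl, Or.inl hxy⟩
      · cases heq; exact Or.inr ⟨rfl, Or.inr ⟨rfl, huv⟩⟩
  | [], _ :: _, h, _, _ => by simp at h
  | _ :: _, [], h, _, _ => by simp at h

lemma countP_or_disjoint (p q : α → Bool) (l : List α)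
    (h : ∀ x ∈ l, ¬(p x = true ∧ q x = true)) :
    l.countP (fun x => p x || q x) = l.countP p + l.countP q := by
  induction l with
  | nil => simp
  | cons a l ih =>
    rw [List.countP_cons, List.countP_cons, List.countP_cons,
      ih (fun x hx => h x (List.mem_cons_of_mem a hx))]
    have := h a (List.mem_cons_self)
    by_cases hp : p a <;> by_cases hq : q a <;> simp_all <;> omega

lemma perm_shift (n m : ℕ) (hn : 0 < n) :
    ((List.range n).map (fun k => (k + m) % n)).Perm (List.range n) := by
  have hnd : ((List.range n).map (fun k => (k + m) % n)).Nodup := by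
    refine (List.nodup_range ..).map_on ?_
    intro x hx y hy hxy
    rw [List.mem_range] at hx hy
    have : x % n = y % n := Nat.ModEq.add_right_cancel' m hxy
    rwa [Nat.mod_eq_of_lt hx, Nat.mod_eq_of_lt hy] at this
  have hsub : ((List.range n).map (fun k => (k + m) % n)) ⊆ List.range n := by
    intro x hx
    rw [List.mem_map] at hx
    obtain ⟨k, _, rfl⟩ := hx
    exact List.mem_range.2 (Nat.mod_lt _ hn)
  exact (hnd.subperm hsub).perm_of_length_le (by simp)

lemma map_getElem!_range (S : List α) : (List.range S.length).map (fun j => S[j]!) = S := by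
  apply List.ext_getElem (by simp)
  intro j h1 h2
  simp only [List.getElem_map, List.getElem_range]
  rw [getElem!_pos S j h2]

lemma mem_unique_of_count_one {S : List α} {c : α} (hc : S.count c = 1)
    {q r : ℕ} (hq : q < S.length) (hr : r < S.length)
    (hq' : S[q] = c) (hr' : S[r] = c) : q = r := by
  by_contra hne
  have key : ∀ (a b : ℕ) (hab : a < b) (hb : b < S.length),
      S[a]'(Nat.lt_trans hab hb) = c → S[b] = c → S.Duplicate c := by
    intro a b hab hb ha' hb'
    have hmem2 : c ∈ S.drop (a + 1) := by
      have : (S.drop (a + 1))[b - (a+1)]'(by rw [List.length_drop]; omega) = c := by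
        rw [List.getElem_drop]; rw [← hb']; congr 1; omega
      exact this ▸ List.getElem_mem _
    have hmem1 : c ∈ S.take (a + 1) := by
      have : (S.take (a+1))[a]'(by rw [List.length_take]; omega) = c := by
        rw [List.getElem_take]; exact ha'
      exact this ▸ List.getElem_mem _
    refine List.duplicate_iff_sublist.2 ?_
    calc [c, c] = [c] ++ [c] := rfl
      _ <+ S.take (a+1) ++ S.drop (a+1) :=
        List.Sublist.append (List.singleton_sublist.2 hmem1) (List.singleton_sublist.2 hmem2)
      _ = S := List.take_append_drop (a + 1) S
  have hdup : S.Duplicate c := by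
    rcases Nat.lt_or_ge q r with h | h
    · exact key q r h hr hq' hr'
    · exact key r q (by omega) hq hr' hq'
  have := List.duplicate_iff_two_le_count.1 hdup
  omega

lemma rotate_inj {S : List α} {c : α} (hc : S.count c = 1) {i j : ℕ}
    (hi : i < S.length) (hj : j < S.length) (h : S.rotate i = S.rotate j) : i = j := by
  set n := S.length with hn
  have hn0 : 0 < n := by omega
  have hcmem : c ∈ S := List.count_pos_iff.1 (by omega)
  obtain ⟨p, hp, hpc⟩ := List.mem_iff_getElem.1 hcmem
  set k := (p + n - i) % n with hk
  have hkn : k < n := Nat.mod_lt _ hn0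
  have hgi : (S.rotate i)[k]'(by rw [List.length_rotate]; omega)
      = S[(k + i) % n]'(Nat.mod_lt _ hn0) := by
    have := List.get_rotate S i ⟨k, by rw [List.length_rotate]; omega⟩
    simpa [hn] using this
  have hgj : (S.rotate j)[k]'(by rw [List.length_rotate]; omega)
      = S[(k + j) % n]'(Nat.mod_lt _ hn0) := by
    have := List.get_rotate S j ⟨k, by rw [List.length_rotate]; omega⟩
    simpa [hn] using this
  have hki : (k + i) % n = p := by
    rw [hk, Nat.mod_add_mod]
    have : p + n - i + i = p + n := by omega
    rw [this, Nat.add_mod_right, Nat.mod_eq_of_lt hp]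
  have heq : S[(k + i) % n]'(Nat.mod_lt _ hn0) = S[(k + j) % n]'(Nat.mod_lt _ hn0) := by
    rw [← hgi, ← hgj]; simp only [h]
  have hpc' : S[(k+i) % n]'(Nat.mod_lt _ hn0) = c := by
    have := hpc
    simp only [← hki] at this
    exact this
  have heq' : S[(k + i) % n]'(Nat.mod_lt _ hn0) = S[(k + j) % n]'(Nat.mod_lt _ hn0) := heq
  have hkj : (k + j) % n = p :=
    (mem_unique_of_count_one hc (Nat.mod_lt _ hn0) hp (by rw [heq'] at hpc'; exact hpc') hpc)
  have : (k + i) % n = (k + j) % n := by rw [hki, hkj]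
  have h2 : i % n = j % n := Nat.ModEq.add_left_cancel' k this
  rwa [Nat.mod_eq_of_lt hi, Nat.mod_eq_of_lt hj] at h2

lemma lex_asymm {u v : List α} (h : List.Lex (· < ·) u v) (h' : List.Lex (· < ·) v u) : False :=
  List.lex_asymm (fun h1 h2 => lt_asymm h1 h2) h h'

lemma mem_take_sorted {M : List (List α)} (hs : M.Pairwise (List.Lex (· < ·))) {s : ℕ}
    (hsl : s < M.length) {r : List α} (hr : r ∈ M.take s) : List.Lex (· < ·) r (M[s]'hsl) := by
  obtain ⟨j, hj, rfl⟩ := List.mem_iff_getElem.1 hr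
  rw [List.length_take] at hj
  rw [List.getElem_take]
  exact List.pairwise_iff_getElem.1 hs j s (by omega) hsl (by omega)

lemma mem_drop_sorted {M : List (List α)} (hs : M.Pairwise (List.Lex (· < ·))) {s : ℕ}
    (hsl : s < M.length) {r : List α} (hr : r ∈ M.drop s) : ¬ List.Lex (· < ·) r (M[s]'hsl) := by
  obtain ⟨j, hj, rfl⟩ := List.mem_iff_getElem.1 hr
  rw [List.length_drop] at hj
  rw [List.getElem_drop]
  rcases Nat.eq_zero_or_pos j with rfl | hj0
  · simp only [Nat.add_zero]
    exact fun h => lex_asymm h h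
  · exact fun h => lex_asymm h (List.pairwise_iff_getElem.1 hs s (s + j) hsl (by omega) (by omega))

lemma countP_lt_sorted (M : List (List α)) (hs : M.Pairwise (List.Lex (· < ·))) (s : ℕ)
    (hsl : s < M.length) :
    M.countP (fun r => decide (List.Lex (· < ·) r (M[s]'hsl))) = s := by
  obtain ⟨y, hy⟩ : ∃ y, M[s]'hsl = y := ⟨_, rfl⟩
  rw [hy]
  conv_lhs => rw [← List.take_append_drop s M]
  rw [List.countP_append]
  have h1 : (M.take s).countP (fun r => decide (List.Lex (· < ·) r y)) = s := by
    have := List.countP_eq_length (p := fun r => decide (List.Lex (· < ·) r y))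
      (l := M.take s)
    rw [this.2 (fun r hr => decide_eq_true (hy ▸ mem_take_sorted hs hsl hr)), List.length_take]
    omega
  have h2 : (M.drop s).countP (fun r => decide (List.Lex (· < ·) r y)) = 0 := by
    rw [List.countP_eq_zero]
    intro r hr
    simp only [decide_eq_true_eq]
    exact hy ▸ mem_drop_sorted hs hsl hr
  omega

end helpers

/-- **Correctness of the LF-computation of the FM-index.**
Let `S` be a list in which some character occurs exactly once (so its rotations are pairwise
distinct) and let `M` be the list of the rotations of `S` sorted in increasing lexicographic
order (rows indexed here from `0`).  For a row index `i`, let `L i` be the last character of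
row `M[i]`, let `C c` be the number of positions of `S` holding a character strictly smaller
than `c`, and let `Occ c i` be the number of rows among the first `i+1` whose last character
is `c`.  Then the right cyclic shift of `M[i]` equals the row of `M` with (0-based) index
`C (L i) + Occ (L i) i - 1`. -/
theorem stmt7 {α : Type*} [LinearOrder α] [Inhabited α] (S : List α)
    (hone : ∃ c, S.count c = 1)
    (M : List (List α))
    (hperm : List.Perm M ((List.range S.length).map (fun i => rot i S)))
    (hsorted : M.Pairwise (List.Lex (· < ·)))
    (i : Fin M.length) :
    ∃ h : (S.filter (fun a => a < (M.get i).getLast!)).length +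
            ((M.map (fun r => r.getLast!)).take ((i : ℕ) + 1)).count
              ((M.get i).getLast!) - 1 < M.length,
      rshift (M.get i) =
        M.get ⟨(S.filter (fun a => a < (M.get i).getLast!)).length +
            ((M.map (fun r => r.getLast!)).take ((i : ℕ) + 1)).count
              ((M.get i).getLast!) - 1, h⟩ := by
  classical
  obtain ⟨c₀, hc₀⟩ := hone
  have hn : 0 < S.length := by
    rcases S with _ | ⟨a, S⟩
    · simp at hc₀
    · simp
  set n := S.length with hndef
  have hperm' : M.Perm ((List.range n).map (fun k => S.rotate k)) := by
    refine hperm.trans ?_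
    rw [List.map_congr_left]
    intro k hk
    rw [List.mem_range] at hk
    rw [rot, List.rotate_eq_drop_append_take (le_of_lt hk)]
  have hlenM : M.length = n := by simpa using hperm'.length_eq
  have hmemM : ∀ r ∈ M, ∃ k, k < n ∧ r = S.rotate k := by
    intro r hr
    have := hperm'.subset hr
    rw [List.mem_map] at this
    obtain ⟨k, hk, rfl⟩ := this
    exact ⟨k, List.mem_range.1 hk, rfl⟩
  have hlenr : ∀ r ∈ M, r.length = n := by
    intro r hr
    obtain ⟨k, _, rfl⟩ := hmemM r hr
    simp [hndef]
  have hner : ∀ r ∈ M, r ≠ [] := by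
    intro r hr
    rw [← List.length_pos_iff, hlenr r hr]
    omega
  have hrotmem : ∀ m : ℕ, S.rotate m ∈ M := by
    intro m
    rw [hperm'.mem_iff, List.mem_map]
    exact ⟨m % n, List.mem_range.2 (Nat.mod_lt _ hn), List.rotate_mod S m⟩
  have hclosed : ∀ r ∈ M, rshift r ∈ M := by
    intro r hr
    obtain ⟨k, hk, rfl⟩ := hmemM r hr
    rw [rshift_rotate S hn k]
    exact hrotmem _
  have hnodup : M.Nodup := by
    rw [hperm'.nodup_iff]
    refine List.Nodup.map_on ?_ (List.nodup_range)
    intro x hx y hy hxy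
    exact rotate_inj hc₀ (List.mem_range.1 hx) (List.mem_range.1 hy) hxy
  have hrinj : ∀ r1 ∈ M, ∀ r2 ∈ M, rshift r1 = rshift r2 → r1 = r2 := by
    intro r1 h1 r2 h2 he
    rw [rshift, rshift] at he
    injection he with e1 e2
    rw [← List.dropLast_append_getLast (hner r1 h1), ← List.dropLast_append_getLast (hner r2 h2),
      e2]
    congr 1
    rw [← getLast!_eq, ← getLast!_eq, e1]
  have hpermshift : M.Perm (M.map rshift) := by
    have hnd : (M.map rshift).Nodup := hnodup.map_on hrinj
    have hsub : (M.map rshift) ⊆ M := by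
      intro x hx
      rw [List.mem_map] at hx
      obtain ⟨r, hr, rfl⟩ := hx
      exact hclosed r hr
    exact ((hnd.subperm hsub).perm_of_length_le (by simp)).symm
  -- notation
  have hMi : M.get i ∈ M := List.get_mem M i
  have hMine : M.get i ≠ [] := hner _ hMi
  obtain ⟨x, cc, hxc⟩ : ∃ x cc, M.get i = x ++ [cc] := by
    obtain ⟨x, cc, h⟩ := (List.eq_nil_or_concat (M.get i)).resolve_left hMine
    exact ⟨x, cc, by rw [h, List.concat_eq_append]⟩
  have hgl : (M.get i).getLast! = cc := by
    rw [hxc, getLast!_eq (by simp)]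
    simp [List.getLast_append]
  have hrsh : rshift (M.get i) = cc :: x := by rw [hxc, rshift_concat]
  have hxdl : (M.get i).dropLast = x := by rw [hxc]; simp
  have hyM : rshift (M.get i) ∈ M := hclosed _ hMi
  obtain ⟨s, hsl, hsy⟩ := List.mem_iff_getElem.1 hyM
  -- the sorted-count identity
  have hcount_s : M.countP (fun r => decide (List.Lex (· < ·) r (rshift (M.get i)))) = s := by
    have := countP_lt_sorted M hsorted s hsl
    rw [hsy] at this
    exact this
  -- opaque copy of M.get i for rewriting purposes
  obtain ⟨Mi, hMieq⟩ : ∃ t, M.get i = t := ⟨_, rfl⟩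
  have hMi' : Mi ∈ M := hMieq ▸ hMi
  have hstep : M.countP (fun r => decide (List.Lex (· < ·) r (rshift (M.get i))))
      = M.countP (fun r => decide (r.getLast! < cc)
          || (decide (r.getLast! = cc) && decide (List.Lex (· < ·) r Mi))) := by
    calc M.countP (fun r => decide (List.Lex (· < ·) r (rshift (M.get i))))
        = (M.map rshift).countP (fun r => decide (List.Lex (· < ·) r (rshift (M.get i)))) :=
          hpermshift.countP_eq _
      _ = M.countP (fun r => decide (List.Lex (· < ·) (rshift r) (rshift (M.get i)))) := by
          rw [List.countP_map]; rfl
      _ = _ := by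
          refine List.countP_congr ?_
          intro r hr
          have hrne : r ≠ [] := hner _ hr
          obtain ⟨u, d, hud⟩ : ∃ u d, r = u ++ [d] := by
            obtain ⟨u, d, h⟩ := (List.eq_nil_or_concat r).resolve_left hrne
            exact ⟨u, d, by rw [h, List.concat_eq_append]⟩
          have hrl : r.getLast! = d := by
            rw [hud, getLast!_eq (by simp)]
            simp [List.getLast_append]
          have hlenu : u.length = x.length := by
            have h1 : r.length = n := hlenr _ hr
            have h2 : (M.get i).length = n := hlenr _ hMi
            rw [hud] at h1
            rw [hxc] at h2
            simp at h1 h2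
            omega
          have hiff : List.Lex (· < ·) (rshift r) (rshift (M.get i)) ↔
              r.getLast! < cc ∨ (r.getLast! = cc ∧ List.Lex (· < ·) r Mi) := by
            rw [hrsh, hrl, hud, rshift_concat, lex_cons_iff', ← hMieq, hxc]
            constructor
            · rintro (h | ⟨rfl, h⟩)
              · exact Or.inl h
              · exact Or.inr ⟨rfl, (lex_append_iff hlenu).2 (Or.inl h)⟩
            · rintro (h | ⟨rfl, h⟩)
              · exact Or.inl h
              · refine Or.inr ⟨rfl, ?_⟩
                rcases (lex_append_iff hlenu).1 h with h' | ⟨_, h'⟩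
                · exact h'
                · rw [List.lex_singleton_iff] at h'
                  exact absurd h' (lt_irrefl _)
          simp only [decide_eq_decide.2 hiff]
          by_cases h1 : r.getLast! < cc <;> by_cases h2 : r.getLast! = cc <;>
            by_cases h3 : List.Lex (· < ·) r Mi <;> simp [h1, h2, h3]
  have hsplit : M.countP (fun r => decide (r.getLast! < cc)
          || (decide (r.getLast! = cc) && decide (List.Lex (· < ·) r Mi)))
      = M.countP (fun r => decide (r.getLast! < cc))
        + M.countP (fun r => decide (r.getLast! = cc) && decide (List.Lex (· < ·) r Mi)) := by
    refine countP_or_disjoint _ _ _ ?_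
    rintro r _ ⟨h1, h2⟩
    rw [decide_eq_true_eq] at h1
    rw [Bool.and_eq_true, decide_eq_true_eq] at h2
    exact absurd h1 (h2.1 ▸ lt_irrefl _)
  -- Part 1 : the C-part
  have hlasts : (M.map (fun r => r.getLast!)).Perm S := by
    have h1 : (M.map (fun r => r.getLast!)).Perm
        (((List.range n).map (fun k => S.rotate k)).map (fun r => r.getLast!)) :=
      hperm'.map _
    rw [List.map_map] at h1
    have h2 : (List.range n).map ((fun r : List α => r.getLast!) ∘ (fun k => S.rotate k))
        = (List.range n).map (fun k => S[(k + (n - 1)) % n]!) := by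
      refine List.map_congr_left ?_
      intro k hk
      have hnz : S.rotate k ≠ [] := by
        rw [← List.length_pos_iff, List.length_rotate]; omega
      show (S.rotate k).getLast! = S[(k + (n - 1)) % n]!
      rw [getLast!_eq hnz, List.getLast_eq_getElem]
      have hlr : (S.rotate k).length = n := List.length_rotate S k
      have := List.get_rotate S k ⟨(S.rotate k).length - 1, by omega⟩
      simp only [List.get_eq_getElem] at this
      rw [this]
      rw [getElem!_pos S _ (Nat.mod_lt _ hn)]
      congr 1
      rw [hlr]
      congr 1
      omega
    have h3 : (List.range n).map (fun k => S[(k + (n - 1)) % n]!)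
        = ((List.range n).map (fun k => (k + (n - 1)) % n)).map (fun j => S[j]!) := by
      rw [List.map_map]; rfl
    have h4 : (((List.range n).map (fun k => (k + (n - 1)) % n)).map (fun j => S[j]!)).Perm
        ((List.range n).map (fun j => S[j]!)) := (perm_shift n (n - 1) hn).map _
    have h5 : (List.range n).map (fun j => S[j]!) = S := by
      rw [hndef]
      exact map_getElem!_range S
    rw [h2, h3] at h1
    have h6 : ((List.range n).map (fun j => S[j]!)).Perm S := by
      rw [h5]
    exact h1.trans (h4.trans h6)
  have hA : M.countP (fun r => decide (r.getLast! < cc))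
      = (S.filter (fun a => decide (a < cc))).length := by
    have h1 : (M.map (fun r => r.getLast!)).countP (fun a => decide (a < cc))
        = M.countP (fun r => decide (r.getLast! < cc)) := by
      rw [List.countP_map]; rfl
    rw [← h1, hlasts.countP_eq, List.countP_eq_length_filter]
  -- Part 2 : the Occ-part
  have hB : M.countP (fun r => decide (r.getLast! = cc) && decide (List.Lex (· < ·) r Mi))
      = (M.take i.1).countP (fun r => decide (r.getLast! = cc)) := by
    have hMig : Mi = M[i.1]'i.2 := by rw [← hMieq, List.get_eq_getElem]
    conv_lhs => rw [← List.take_append_drop i.1 M]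
    rw [List.countP_append]
    have hzero : (M.drop i.1).countP
        (fun r => decide (r.getLast! = cc) && decide (List.Lex (· < ·) r Mi)) = 0 := by
      rw [List.countP_eq_zero]
      intro r hr
      have := mem_drop_sorted hsorted i.2 hr
      rw [← hMig] at this
      simp [this]
    rw [hzero, Nat.add_zero]
    refine List.countP_congr ?_
    intro r hr
    have := mem_take_sorted hsorted i.2 hr
    rw [← hMig] at this
    rw [decide_eq_true this, Bool.and_true]
  have hOcc : ((M.map (fun r => r.getLast!)).take (i.1 + 1)).count cc
      = (M.take i.1).countP (fun r => decide (r.getLast! = cc)) + 1 := by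
    rw [← List.map_take, List.take_succ, List.getElem?_eq_getElem i.2, Option.toList_some,
      List.map_append, List.count_append]
    have h1 : (List.map (fun r => r.getLast!) [M[i.1]'i.2]).count cc = 1 := by
      have hg : (M[i.1]'i.2).getLast! = cc := by
        rw [← hgl, List.get_eq_getElem]
      simp only [List.map_cons, List.map_nil, hg, List.count_singleton_self]
    rw [h1]
    congr 1
    rw [List.count_eq_countP, List.countP_map]
    refine List.countP_congr ?_
    intro r _
    by_cases h : r.getLast! = cc <;> simp [h]
  -- put everything together
  have hfinal : (S.filter (fun a => decide (a < (M.get i).getLast!))).length +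
      ((M.map (fun r => r.getLast!)).take (i.1 + 1)).count ((M.get i).getLast!) - 1 = s := by
    rw [hgl, hOcc, ← hA]
    have := hcount_s
    rw [hstep, hsplit] at this
    omega
  rw [show ((i : ℕ) + 1) = i.1 + 1 from rfl] at *
  refine ⟨hfinal ▸ hsl, ?_⟩
  have : (⟨(S.filter (fun a => decide (a < (M.get i).getLast!))).length +
      ((M.map (fun r => r.getLast!)).take (i.1 + 1)).count ((M.get i).getLast!) - 1,
      hfinal ▸ hsl⟩ : Fin M.length) = ⟨s, hsl⟩ := Fin.ext hfinal
  rw [this, List.get_eq_getElem]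
  exact hsy.symm
end

section
/- Let S be a list of length n over a linearly ordered type α in which some character occurs exactly once, and let M be the list of the n rotations sorted in increasing lexicographic order, rows indexed 1,…,n; let L i be the last character of row M[i], C(c) the number of positions of S holding a character strictly smaller than c, and Occ(c,i) the number of indices j with 1 ≤ j ≤ i and L j = c. Let W be a list over α with |W| < n, let c be a character, and suppose first ≤ last are such that { i : 1 ≤ i ≤ n and W is a prefix of M[i] } = { first, first+1, …, last }. Then { i : 1 ≤ i ≤ n and c :: W is a prefix of M[i] } = { C(c) + Occ(c, first−1) + 1, …, C(c) + Occ(c, last) } (this set being empty when C(c) + Occ(c, first−1) + 1 > C(c) + Occ(c, last)). -/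
namespace FMAux

variable {α : Type*}

lemma getLast!_eq_getLast [Inhabited α] {l : List α} (h : l ≠ []) :
    l.getLast! = l.getLast h := List.getLast!_of_getLast? (l.getLast?_eq_getLast h)

lemma getLast!_concat [Inhabited α] (l : List α) (a : α) : (l ++ [a]).getLast! = a :=
  List.getLast!_of_getLast? List.getLast?_concat

lemma rot_length (i : ℕ) (S : List α) : (rot i S).length = S.length := by
  simp [rot]; omega

lemma rot_getD (S : List α) (d : α) {i k : ℕ} (hi : i < S.length) (hk : k < S.length) :
    (rot i S).getD k d = S.getD ((i + k) % S.length) d := by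
  rcases lt_or_ge k (S.length - i) with h | h
  · rw [List.getD_eq_getElem?_getD, List.getD_eq_getElem?_getD, rot,
      List.getElem?_append_left (by simp; omega), List.getElem?_drop,
      Nat.mod_eq_of_lt (by omega)]
  · rw [List.getD_eq_getElem?_getD, List.getD_eq_getElem?_getD, rot,
      List.getElem?_append_right (by simp; omega), List.getElem?_take]
    have h1 : S.length ≤ i + k := by omega
    rw [Nat.mod_eq_sub_mod h1, Nat.mod_eq_of_lt (by omega)]
    simp only [List.length_drop]
    rw [if_pos (by omega)]
    have : k - (S.length - i) = i + k - S.length := by omega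
    rw [this]

lemma two_le_count_of_two [DecidableEq α] [Inhabited α] {S : List α} {a b : ℕ} {c : α}
    (hab : a < b) (hb : b < S.length) (ha' : S.getD a default = c)
    (hb' : S.getD b default = c) : 2 ≤ S.count c := by
  rw [List.getD_eq_getElem S default (by omega : a < S.length)] at ha'
  rw [List.getD_eq_getElem S default hb] at hb'
  have h1 : c ∈ S.take b := by
    have hlen : a < (S.take b).length := by simp; omega
    have he : (S.take b)[a] = c := by rw [List.getElem_take]; exact ha'
    exact he ▸ List.getElem_mem hlen
  have h2 : c ∈ S.drop b := by
    rw [List.drop_eq_getElem_cons hb]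
    exact hb' ▸ List.mem_cons_self
  calc 2 = 1 + 1 := rfl
    _ ≤ (S.take b).count c + (S.drop b).count c :=
        Nat.add_le_add (List.count_pos_iff.mpr h1) (List.count_pos_iff.mpr h2)
    _ = S.count c := by rw [← List.count_append, List.take_append_drop]

lemma downset_eq_range {D : Finset ℕ} (h : ∀ j ∈ D, ∀ k, k ≤ j → k ∈ D) :
    D = Finset.range D.card := by
  ext j
  simp only [Finset.mem_range]
  constructor
  · intro hj
    have hsub : Finset.range (j + 1) ⊆ D := fun k hk =>
      h j hj k (by simpa [Nat.lt_succ_iff] using hk)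
    have := Finset.card_le_card hsub
    simpa using this
  · intro hj
    by_contra hjD
    have hsub : D ⊆ Finset.range j := by
      intro k hk
      simp only [Finset.mem_range]
      by_contra hkj
      exact hjD (h k hk j (by omega))
    have := Finset.card_le_card hsub
    simp only [Finset.card_range] at this
    omega

lemma card_filter_range (p : ℕ → Prop) [DecidablePred p] (t : ℕ) :
    ((Finset.range t).filter p).card = (List.range t).countP (fun j => decide (p j)) := by
  induction t with
  | zero => simp
  | succ t ih =>
    rw [Finset.range_add_one, Finset.filter_insert, List.range_succ, List.countP_append]
    by_cases h : p t
    · rw [if_pos h, Finset.card_insert_of_notMem (by simp), ih]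
      simp [h]
    · rw [if_neg h, ih]
      simp [h]

lemma map_getD_range (l : List α) (d : α) {t : ℕ} (h : t ≤ l.length) :
    (List.range t).map (fun j => l.getD j d) = l.take t := by
  apply List.ext_getElem
  · simp; omega
  · intro i h1 h2
    simp only [List.getElem_map, List.getElem_range, List.getElem_take]
    rw [List.getD_eq_getElem]

lemma countP_le_of_lt [LinearOrder α] (c : α) (S : List α) :
    S.countP (fun x => decide (x ≤ c)) =
      S.countP (fun x => decide (x < c)) + S.count c := by
  induction S with
  | nil => simp
  | cons a t ih =>
    rw [List.countP_cons, List.countP_cons, List.count_cons]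
    rcases lt_trichotomy a c with h | h | h
    · have h3 : (a == c) = false := by simp [h.ne]
      simp [h3, h, le_of_lt h, ih]
      omega
    · subst h
      simp [ih]
      omega
    · have h1 : ¬ a ≤ c := not_le_of_gt h
      have h2 : ¬ a < c := not_lt_of_gt h
      have h3 : (a == c) = false := by simp [h.ne']
      simp [h1, h2, h3, ih]
lemma lex_of_concat [LinearOrder α] :
    ∀ {x y : List α} {a : α}, x.length = y.length →
      List.Lex (· < ·) (x ++ [a]) (y ++ [a]) → List.Lex (· < ·) x y := by
  intro x
  induction x with
  | nil =>
    intro y a hlen h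
    have : y = [] := by
      cases y
      · rfl
      · simp at hlen
    subst this
    simp only [List.nil_append] at h
    cases h with
    | rel h => exact absurd h (lt_irrefl a)
    | cons h => exact absurd h (fun h' => by cases h')
  | cons b x' ih =>
    intro y a hlen h
    cases y with
    | nil => simp at hlen
    | cons b' y' =>
      simp only [List.cons_append] at h
      cases h with
      | rel h => exact List.Lex.rel h
      | cons h => exact List.Lex.cons (ih (by simpa using hlen) h)

def frot [Inhabited α] (r : List α) : List α := r.getLast! :: r.dropLast

def grot [Inhabited α] (r : List α) : List α := r.tail ++ [r.head!]

lemma grot_frot [Inhabited α] {r : List α} (h : r ≠ []) : grot (frot r) = r := by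
  simp only [frot, grot, List.tail_cons, List.head!_cons]
  rw [getLast!_eq_getLast h]
  exact List.dropLast_append_getLast h

lemma frot_grot [Inhabited α] {r : List α} (h : r ≠ []) : frot (grot r) = r := by
  simp only [frot, grot, getLast!_concat, List.dropLast_concat]
  exact List.cons_head!_tail h

lemma grot_rot [Inhabited α] (S : List α) {k : ℕ} (hk : k < S.length) :
    grot (rot k S) = rot ((k + 1) % S.length) S := by
  rcases lt_or_ge (k + 1) S.length with h | h
  · rw [Nat.mod_eq_of_lt h]
    have hd : S.drop k = S[k] :: S.drop (k + 1) := List.drop_eq_getElem_cons hk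
    simp only [grot, rot, hd, List.cons_append, List.tail_cons, List.head!_cons]
    rw [List.append_assoc]
    congr 1
    rw [List.take_succ, List.getElem?_eq_getElem hk]
    rfl
  · have hk1 : k + 1 = S.length := by omega
    have h0 : (k + 1) % S.length = 0 := by rw [hk1, Nat.mod_self]
    rw [h0]
    have hd : S.drop k = S[k] :: S.drop (k + 1) := List.drop_eq_getElem_cons hk
    have hd' : S.drop (k + 1) = [] := by apply List.drop_eq_nil_of_le; omega
    have ht : S.take (k + 1) = S.take k ++ [S[k]] := by
      rw [List.take_succ, List.getElem?_eq_getElem hk]; rfl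
    rw [hk1, List.take_length] at ht
    simp only [grot, rot, hd, hd', List.cons_append, List.nil_append, List.tail_cons,
      List.head!_cons, List.drop_zero, List.take_zero, List.append_nil]
    exact ht.symm

lemma mod_cases (a b : ℕ) (hb : 0 < b) (ha : a < 2 * b) :
    a % b = a ∨ (a % b = a - b ∧ b ≤ a) := by
  rcases lt_or_ge a b with h | h
  · left; exact Nat.mod_eq_of_lt h
  · right
    exact ⟨by rw [Nat.mod_eq_sub_mod h, Nat.mod_eq_of_lt (by omega)], h⟩

end FMAux

/-- **Invariant of one phase of the FM-index backward search (`get_rows`).**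
Let `S` be a list of length `n` in which some character occurs exactly once, and let `M` be
the list of the `n` rotations of `S` sorted in increasing lexicographic order, rows indexed
`1, …, n` (so row `i` is `M.getD (i-1) []`).  Let `L i` be the last character of row `i`,
`C c = (S.filter (· < c)).length` the number of positions of `S` holding a character
strictly smaller than `c` and `Occ c i` the number of rows among the first `i` whose last
character is `c`.  Let `W` be a list with `W.length < n`, `c` a character, and suppose
`first ≤ last` are such that the set of row indices `i` (with `1 ≤ i ≤ n`) whose row is
prefixed by `W` is exactly `{first, …, last}`.  Then the set of row indices whose row is
prefixed by `c :: W` is exactly `{C c + Occ c (first-1) + 1, …, C c + Occ c last}`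
(empty when the left endpoint exceeds the right one). -/
theorem stmt8 {α : Type*} [LinearOrder α] [Inhabited α] (S : List α)
    (hone : ∃ c, S.count c = 1)
    (M : List (List α))
    (hperm : List.Perm M ((List.range S.length).map (fun i => rot i S)))
    (hsorted : M.Pairwise (List.Lex (· < ·)))
    (W : List α) (hW : W.length < S.length) (c : α)
    (first last : ℕ) (hfl : first ≤ last)
    (hset : {i : ℕ | 1 ≤ i ∧ i ≤ S.length ∧ W <+: M.getD (i - 1) []} =
      Set.Icc first last) :
    {i : ℕ | 1 ≤ i ∧ i ≤ S.length ∧ (c :: W) <+: M.getD (i - 1) []} =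
      Set.Icc
        ((S.filter (fun a => a < c)).length +
          ((M.map (fun r => r.getLast!)).take (first - 1)).count c + 1)
        ((S.filter (fun a => a < c)).length +
          ((M.map (fun r => r.getLast!)).take last).count c) := by
  classical
  obtain ⟨c0, hc0⟩ := hone
  have hn0 : 0 < S.length := by omega
  have hMlen : M.length = S.length := by
    rw [hperm.length_eq, List.length_map, List.length_range]
  -- unique position of c0
  have hc0mem : c0 ∈ S := by rw [← List.count_pos_iff]; omega
  have hpn : S.idxOf c0 < S.length := List.idxOf_lt_length_iff.mpr hc0mem
  have hpval : S.getD (S.idxOf c0) default = c0 := by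
    rw [List.getD_eq_getElem S default hpn]
    exact List.getElem_idxOf hpn
  have huniq : ∀ q, q < S.length → S.getD q default = c0 → q = S.idxOf c0 := by
    intro q hq hval
    by_contra hne
    rcases lt_or_gt_of_ne hne with h | h
    · have := FMAux.two_le_count_of_two h hpn hval hpval
      omega
    · have := FMAux.two_le_count_of_two h hq hpval hval
      omega
  -- rotations are injective
  have hrotinj : ∀ i, i < S.length → ∀ j, j < S.length → rot i S = rot j S → i = j := by
    intro i hi j hj heq
    have hkn : (S.idxOf c0 + S.length - i) % S.length < S.length := Nat.mod_lt _ hn0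
    have h1 : (i + (S.idxOf c0 + S.length - i) % S.length) % S.length = S.idxOf c0 := by
      rw [Nat.add_mod_mod]
      have he : i + (S.idxOf c0 + S.length - i) = S.idxOf c0 + S.length := by omega
      rw [he, Nat.add_mod_right, Nat.mod_eq_of_lt hpn]
    have e1 : S.getD ((j + (S.idxOf c0 + S.length - i) % S.length) % S.length) default
        = c0 := by
      rw [← FMAux.rot_getD S default hj hkn, ← heq, FMAux.rot_getD S default hi hkn,
        h1, hpval]
    have h3 := huniq _ (Nat.mod_lt _ hn0) e1
    have ei := FMAux.mod_cases (i + (S.idxOf c0 + S.length - i) % S.length) S.length hn0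
      (by omega)
    have ej := FMAux.mod_cases (j + (S.idxOf c0 + S.length - i) % S.length) S.length hn0
      (by omega)
    rcases ei with e | ⟨e, he⟩ <;> rcases ej with f | ⟨f, hf⟩ <;> omega
  -- membership in M
  have hmemM : ∀ r : List α, r ∈ M ↔ ∃ k, k < S.length ∧ r = rot k S := by
    intro r
    rw [hperm.mem_iff, List.mem_map]
    constructor
    · rintro ⟨k, hk, rfl⟩
      exact ⟨k, by simpa using hk, rfl⟩
    · rintro ⟨k, hk, rfl⟩
      exact ⟨k, by simpa using hk, rfl⟩
  have hnodup : M.Nodup := by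
    rw [hperm.nodup_iff]
    apply List.Nodup.map_on _ List.nodup_range
    intro x hx y hy hxy
    exact hrotinj x (by simpa using hx) y (by simpa using hy) hxy
  -- row facts
  have hrowmem : ∀ j, j < S.length → M.getD j [] ∈ M := by
    intro j hj
    rw [List.getD_eq_getElem M [] (by omega)]
    exact List.getElem_mem _
  have hrowrot : ∀ j, j < S.length → ∃ k, k < S.length ∧ M.getD j [] = rot k S :=
    fun j hj => (hmemM _).mp (hrowmem j hj)
  have hrowlen : ∀ j, j < S.length → (M.getD j []).length = S.length := by
    intro j hj
    obtain ⟨k, _, hk⟩ := hrowrot j hj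
    rw [hk]
    exact FMAux.rot_length k S
  have hrowne : ∀ j, j < S.length → M.getD j [] ≠ [] := by
    intro j hj h
    have := hrowlen j hj
    rw [h] at this
    simp only [List.length_nil] at this
    omega
  have hrowinj : ∀ i, i < S.length → ∀ j, j < S.length → M.getD i [] = M.getD j [] → i = j := by
    intro i hi j hj h
    rw [List.getD_eq_getElem M [] (by omega), List.getD_eq_getElem M [] (by omega)] at h
    exact hnodup.getElem_inj_iff.mp h
  -- lexicographic facts
  have hlex : ∀ i j, i < S.length → j < S.length → i < j →
      List.Lex (· < ·) (M.getD i []) (M.getD j []) := by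
    intro i j hi hj hij
    rw [List.getD_eq_getElem M [] (by omega), List.getD_eq_getElem M [] (by omega)]
    exact List.pairwise_iff_getElem.mp hsorted i j (by omega) (by omega) hij
  have hlexrefl : ∀ i j, i < S.length → j < S.length →
      List.Lex (· < ·) (M.getD i []) (M.getD j []) → i < j := by
    intro i j hi hj h
    by_contra hle
    push_neg at hle
    rcases eq_or_lt_of_le hle with heq | hlt
    · rw [heq] at h
      exact asymm h h
    · exact asymm (hlex j i hj hi hlt) h
  have hhdmono : ∀ i j, i ≤ j → j < S.length →
      (M.getD i []).head! ≤ (M.getD j []).head! := by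
    intro i j hij hj
    rcases eq_or_lt_of_le hij with rfl | hlt
    · exact le_refl _
    · have h := hlex i j (by omega) hj hlt
      obtain ⟨a, t, ha⟩ := List.exists_cons_of_ne_nil (hrowne i (by omega))
      obtain ⟨b, u, hb⟩ := List.exists_cons_of_ne_nil (hrowne j hj)
      rw [ha, hb] at h
      rw [ha, hb, List.head!_cons, List.head!_cons]
      cases h with
      | rel h => exact le_of_lt h
      | cons h => exact le_refl _
  -- range-map identities
  have hmapM : (List.range S.length).map (fun j => M.getD j []) = M := by
    have h := FMAux.map_getD_range M [] (le_of_eq hMlen.symm)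
    rw [h, ← hMlen, List.take_length]
  have hmaphd : (List.range S.length).map (fun j => (M.getD j []).head!)
      = M.map (fun r => r.head!) := by
    conv_rhs => rw [← hmapM]
    rw [List.map_map]
    rfl
  have hmapls : (List.range S.length).map (fun j => (M.getD j []).getLast!)
      = M.map (fun r => r.getLast!) := by
    conv_rhs => rw [← hmapM]
    rw [List.map_map]
    rfl
  -- heads of M are a permutation of S
  have hpermheads : (M.map (fun r => r.head!)).Perm S := by
    refine (hperm.map _).trans ?_
    rw [List.map_map]
    have h2 : (List.range S.length).map ((fun r => List.head! r) ∘ fun i => rot i S)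
        = (List.range S.length).map (fun j => S.getD j default) := by
      apply List.map_congr_left
      intro k hk
      simp only [List.mem_range] at hk
      simp only [Function.comp_apply]
      rw [rot, List.drop_eq_getElem_cons hk, List.cons_append, List.head!_cons,
        List.getD_eq_getElem S default hk]
    rw [h2, FMAux.map_getD_range S default le_rfl, List.take_length]
  -- lasts of M are a permutation of S
  have hlastrot : ∀ k, k < S.length →
      (rot k S).getLast! = S.getD ((k + (S.length - 1)) % S.length) default := by
    intro k hk
    rcases Nat.eq_zero_or_pos k with rfl | hk0
    · have h0 : rot 0 S = S := by simp [rot]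
      have hmod : (0 + (S.length - 1)) % S.length = S.length - 1 := by
        rw [Nat.zero_add, Nat.mod_eq_of_lt (by omega)]
      have hne : S ≠ [] := by
        intro h
        rw [h] at hn0
        simp at hn0
      rw [h0, hmod, FMAux.getLast!_eq_getLast hne, List.getLast_eq_getElem,
        List.getD_eq_getElem S default (by omega)]
    · obtain ⟨k', rfl⟩ : ∃ k', k = k' + 1 := ⟨k - 1, by omega⟩
      have ht : S.take (k' + 1) = S.take k' ++ [S[k']'(by omega)] := by
        rw [List.take_succ, List.getElem?_eq_getElem (by omega : k' < S.length)]
        rfl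
      have hre : rot (k' + 1) S = (S.drop (k' + 1) ++ S.take k') ++ [S[k']'(by omega)] := by
        rw [rot, ht, List.append_assoc]
      rw [hre, FMAux.getLast!_concat]
      have hmod : (k' + 1 + (S.length - 1)) % S.length = k' := by
        have h1 : k' + 1 + (S.length - 1) = k' + S.length := by omega
        rw [h1, Nat.add_mod_right, Nat.mod_eq_of_lt (by omega)]
      rw [hmod, List.getD_eq_getElem S default (by omega)]
  have hidxperm : ((List.range S.length).map
      (fun k => (k + (S.length - 1)) % S.length)).Perm (List.range S.length) := by
    apply List.Subperm.perm_of_length_le ?_ (by simp)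
    apply List.subperm_of_subset
    · apply List.Nodup.map_on ?_ List.nodup_range
      intro x hx y hy hxy
      simp only [List.mem_range] at hx hy
      have ex := FMAux.mod_cases (x + (S.length - 1)) S.length hn0 (by omega)
      have ey := FMAux.mod_cases (y + (S.length - 1)) S.length hn0 (by omega)
      rcases ex with e | ⟨e, he⟩ <;> rcases ey with f | ⟨f, hf⟩ <;> omega
    · intro a ha
      simp only [List.mem_map, List.mem_range] at ha
      obtain ⟨k, hk, rfl⟩ := ha
      simp only [List.mem_range]
      exact Nat.mod_lt _ hn0
  have hpermlasts : (M.map (fun r => r.getLast!)).Perm S := by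
    refine (hperm.map _).trans ?_
    rw [List.map_map]
    have h2 : (List.range S.length).map ((fun r => List.getLast! r) ∘ fun i => rot i S)
        = ((List.range S.length).map (fun k => (k + (S.length - 1)) % S.length)).map
            (fun j => S.getD j default) := by
      rw [List.map_map]
      apply List.map_congr_left
      intro k hk
      simp only [List.mem_range] at hk
      simp only [Function.comp_apply]
      exact hlastrot k hk
    rw [h2]
    refine (hidxperm.map _).trans ?_
    rw [FMAux.map_getD_range S default le_rfl, List.take_length]
  -- counting heads
  have hCn : (List.range S.length).countP (fun j => decide ((M.getD j []).head! < c))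
      = (S.filter (fun a => a < c)).length := by
    have h1 := (List.countP_map : List.countP (fun a => decide (a < c))
      ((List.range S.length).map (fun j => (M.getD j []).head!)) = _)
    rw [hmaphd] at h1
    rw [show (fun j => decide ((M.getD j []).head! < c))
      = ((fun a => decide (a < c)) ∘ fun j => (M.getD j []).head!) from rfl, ← h1,
      hpermheads.countP_eq, List.countP_eq_length_filter]
  have hCcnt : (List.range S.length).countP (fun j => decide ((M.getD j []).head! ≤ c))
      = (S.filter (fun a => a < c)).length + S.count c := by
    have h1 := (List.countP_map : List.countP (fun a => decide (a ≤ c))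
      ((List.range S.length).map (fun j => (M.getD j []).head!)) = _)
    rw [hmaphd] at h1
    rw [show (fun j => decide ((M.getD j []).head! ≤ c))
      = ((fun a => decide (a ≤ c)) ∘ fun j => (M.getD j []).head!) from rfl, ← h1,
      hpermheads.countP_eq, FMAux.countP_le_of_lt, List.countP_eq_length_filter]
  have hCcntle : (S.filter (fun a => a < c)).length + S.count c ≤ S.length := by
    have h : List.countP (fun j => decide ((M.getD j []).head! ≤ c)) (List.range S.length)
      ≤ (List.range S.length).length := List.countP_le_length
    rw [hCcnt] at h
    simpa using h
  -- characterization of rows starting with c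
  have hFh : ∀ j, j < S.length → ((M.getD j []).head! = c ↔
      (S.filter (fun a => a < c)).length ≤ j ∧
        j < (S.filter (fun a => a < c)).length + S.count c) := by
    have hlt : (Finset.range S.length).filter (fun j => (M.getD j []).head! < c)
        = Finset.range ((S.filter (fun a => a < c)).length) := by
      have hcard := FMAux.card_filter_range (fun j => (M.getD j []).head! < c) S.length
      rw [hCn] at hcard
      rw [← hcard]
      apply FMAux.downset_eq_range
      intro j hj k hk
      simp only [Finset.mem_filter, Finset.mem_range] at hj ⊢
      exact ⟨by omega, lt_of_le_of_lt (hhdmono k j hk hj.1) hj.2⟩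
    have hle : (Finset.range S.length).filter (fun j => (M.getD j []).head! ≤ c)
        = Finset.range ((S.filter (fun a => a < c)).length + S.count c) := by
      have hcard := FMAux.card_filter_range (fun j => (M.getD j []).head! ≤ c) S.length
      rw [hCcnt] at hcard
      rw [← hcard]
      apply FMAux.downset_eq_range
      intro j hj k hk
      simp only [Finset.mem_filter, Finset.mem_range] at hj ⊢
      exact ⟨by omega, le_trans (hhdmono k j hk hj.1) hj.2⟩
    intro j hj
    constructor
    · intro h
      have hj1 : j ∈ (Finset.range S.length).filter
          (fun x => (M.getD x []).head! ≤ c) := by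
        simp only [Finset.mem_filter, Finset.mem_range]
        exact ⟨hj, le_of_eq h⟩
      have hj2 : j ∉ (Finset.range S.length).filter
          (fun x => (M.getD x []).head! < c) := by
        simp only [Finset.mem_filter, Finset.mem_range, not_and]
        intro
        rw [h]
        exact lt_irrefl c
      rw [hle] at hj1
      rw [hlt] at hj2
      simp only [Finset.mem_range] at hj1 hj2
      exact ⟨by omega, hj1⟩
    · rintro ⟨h1, h2⟩
      have hj1 : j ∈ Finset.range ((S.filter (fun a => a < c)).length + S.count c) :=
        Finset.mem_range.mpr h2
      rw [← hle] at hj1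
      have hj2 : j ∉ Finset.range ((S.filter (fun a => a < c)).length) :=
        fun hcon => by simp only [Finset.mem_range] at hcon; omega
      rw [← hlt] at hj2
      simp only [Finset.mem_filter, Finset.mem_range] at hj1 hj2
      rcases eq_or_lt_of_le hj1.2 with h | h
      · exact h
      · exact absurd ⟨hj, h⟩ hj2
  -- frot maps rows to rows
  have hfrot_rot : ∀ k, k < S.length →
      FMAux.frot (rot k S) = rot ((k + (S.length - 1)) % S.length) S := by
    intro k hk
    have hk' : (k + (S.length - 1)) % S.length < S.length := Nat.mod_lt _ hn0
    have h1 := FMAux.grot_rot S hk'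
    have h2 : ((k + (S.length - 1)) % S.length + 1) % S.length = k := by
      rw [Nat.mod_add_mod]
      have he : k + (S.length - 1) + 1 = k + S.length := by omega
      rw [he, Nat.add_mod_right, Nat.mod_eq_of_lt hk]
    rw [h2] at h1
    have hne : rot ((k + (S.length - 1)) % S.length) S ≠ [] := by
      intro hcon
      have := FMAux.rot_length ((k + (S.length - 1)) % S.length) S
      rw [hcon] at this
      simp only [List.length_nil] at this
      omega
    rw [← h1, FMAux.frot_grot hne]
  have hfrotmem : ∀ j, j < S.length → FMAux.frot (M.getD j []) ∈ M := by
    intro j hj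
    obtain ⟨k, hk, hkeq⟩ := hrowrot j hj
    rw [hkeq, hfrot_rot k hk]
    exact (hmemM _).mpr ⟨_, Nat.mod_lt _ hn0, rfl⟩
  -- the LF map on indices
  have hexists : ∀ j, ∃ m, m < S.length ∧
      (j < S.length → M.getD m [] = FMAux.frot (M.getD j [])) := by
    intro j
    by_cases hj : j < S.length
    · have hmem := hfrotmem j hj
      rw [List.mem_iff_getElem] at hmem
      obtain ⟨k, hk, he⟩ := hmem
      refine ⟨k, by omega, fun _ => ?_⟩
      rw [List.getD_eq_getElem M [] hk]
      exact he
    · exact ⟨0, hn0, fun h => absurd h hj⟩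
  choose σ hσlt hσval using hexists
  have hσ : ∀ j, j < S.length →
      σ j < S.length ∧ M.getD (σ j) [] = FMAux.frot (M.getD j []) := by
    intro j hj
    exact ⟨hσlt j, hσval j hj⟩
  have hσhd : ∀ j, j < S.length →
      (M.getD (σ j) []).head! = (M.getD j []).getLast! := by
    intro j hj
    rw [(hσ j hj).2]
    rfl
  have hσinj : ∀ i, i < S.length → ∀ j, j < S.length → σ i = σ j → i = j := by
    intro i hi j hj h
    have e1 := (hσ i hi).2
    have e2 := (hσ j hj).2
    rw [h, e2] at e1
    have e3 := congrArg FMAux.grot e1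
    rw [FMAux.grot_frot (hrowne j hj), FMAux.grot_frot (hrowne i hi)] at e3
    exact (hrowinj j hj i hi e3).symm
  have hσmono : ∀ i j, i < j → j < S.length →
      (M.getD i []).getLast! = c → (M.getD j []).getLast! = c → σ i < σ j := by
    intro i j hij hj hi' hj'
    have hi : i < S.length := by omega
    have di : M.getD i [] = (M.getD i []).dropLast ++ [c] := by
      conv_lhs => rw [← List.dropLast_append_getLast (hrowne i hi)]
      rw [← FMAux.getLast!_eq_getLast (hrowne i hi), hi']
    have dj : M.getD j [] = (M.getD j []).dropLast ++ [c] := by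
      conv_lhs => rw [← List.dropLast_append_getLast (hrowne j hj)]
      rw [← FMAux.getLast!_eq_getLast (hrowne j hj), hj']
    have hlen : (M.getD i []).dropLast.length = (M.getD j []).dropLast.length := by
      rw [List.length_dropLast, List.length_dropLast, hrowlen i hi, hrowlen j hj]
    have hlex2 : List.Lex (· < ·) (M.getD i []).dropLast (M.getD j []).dropLast := by
      apply FMAux.lex_of_concat hlen
      rw [← di, ← dj]
      exact hlex i j hi hj hij
    apply hlexrefl _ _ (hσ i hi).1 (hσ j hj).1
    rw [(hσ i hi).2, (hσ j hj).2]
    simp only [FMAux.frot]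
    rw [hi', hj']
    exact List.Lex.cons hlex2
  have hσsurj : ∀ i, i < S.length → ∃ j, j < S.length ∧ σ j = i ∧
      (M.getD j []).getLast! = (M.getD i []).head! := by
    intro i hi
    obtain ⟨k, hk, hkeq⟩ := hrowrot i hi
    have hgmem : FMAux.grot (M.getD i []) ∈ M := by
      rw [hkeq, FMAux.grot_rot S hk]
      exact (hmemM _).mpr ⟨_, Nat.mod_lt _ hn0, rfl⟩
    rw [List.mem_iff_getElem] at hgmem
    obtain ⟨j, hjM, hje⟩ := hgmem
    have hjn : j < S.length := by omega
    have hjeq : M.getD j [] = FMAux.grot (M.getD i []) := by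
      rw [List.getD_eq_getElem M [] hjM]
      exact hje
    refine ⟨j, hjn, ?_, ?_⟩
    · have h1 : M.getD (σ j) [] = M.getD i [] := by
        rw [(hσ j hjn).2, hjeq, FMAux.frot_grot (hrowne i hi)]
      exact hrowinj _ (hσ j hjn).1 _ hi h1
    · rw [hjeq]
      simp only [FMAux.grot]
      exact FMAux.getLast!_concat _ _
  -- occurrence counts
  set occ : ℕ → ℕ :=
    fun t => ((Finset.range t).filter (fun x => (M.getD x []).getLast! = c)).card
    with hoccdef
  have hocc : ∀ t, t ≤ S.length →
      ((M.map (fun r => r.getLast!)).take t).count c = occ t := by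
    intro t ht
    simp only [hoccdef]
    rw [← List.map_take, ← FMAux.map_getD_range M [] (show t ≤ M.length by omega),
      List.map_map, List.count_eq_countP, List.countP_map, FMAux.card_filter_range]
    apply List.countP_congr
    intro x hx
    simp
  have hoccmono : ∀ s t, s ≤ t → occ s ≤ occ t := by
    intro s t h
    simp only [hoccdef]
    exact Finset.card_le_card (Finset.filter_subset_filter _ (Finset.range_subset_range.mpr h))
  have hoccsucc : ∀ j, (M.getD j []).getLast! = c → occ (j + 1) = occ j + 1 := by
    intro j hj
    simp only [hoccdef]
    rw [Finset.range_add_one, Finset.filter_insert, if_pos hj,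
      Finset.card_insert_of_notMem (by simp)]
  have hocclt : ∀ j t, j < t → (M.getD j []).getLast! = c → occ j < occ t := by
    intro j t hjt hj
    have h1 := hoccsucc j hj
    have h2 := hoccmono (j + 1) t (by omega)
    omega
  have hoccn : occ S.length = S.count c := by
    rw [← hocc S.length le_rfl,
      List.take_of_length_le (by rw [List.length_map, hMlen]),
      hpermlasts.count_eq]
  -- key identity: LF formula
  have hstar : ∀ j, j < S.length → (M.getD j []).getLast! = c →
      σ j = (S.filter (fun a => a < c)).length + occ j := by
    intro j hj hjc
    have hσj := hσ j hj
    have hhd : (M.getD (σ j) []).head! = c := by rw [hσhd j hj, hjc]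
    have hFhj := (hFh (σ j) hσj.1).mp hhd
    have hBcard : occ j = (Finset.Ico ((S.filter (fun a => a < c)).length) (σ j)).card := by
      simp only [hoccdef]
      apply Finset.card_bij (fun x _ => σ x)
      · intro x hx
        simp only [Finset.mem_filter, Finset.mem_range] at hx
        have hxn : x < S.length := by omega
        simp only [Finset.mem_Ico]
        refine ⟨((hFh (σ x) (hσ x hxn).1).mp (by rw [hσhd x hxn, hx.2])).1, ?_⟩
        exact hσmono x j hx.1 hj hx.2 hjc
      · intro x hx y hy hxy
        simp only [Finset.mem_filter, Finset.mem_range] at hx hy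
        exact hσinj x (by omega) y (by omega) hxy
      · intro b hb
        simp only [Finset.mem_Ico] at hb
        have hbn : b < S.length := by omega
        obtain ⟨x, hxn, hxσ, hxls⟩ := hσsurj b hbn
        have hhdb : (M.getD b []).head! = c := (hFh b hbn).mpr ⟨hb.1, by omega⟩
        refine ⟨x, ?_, hxσ⟩
        simp only [Finset.mem_filter, Finset.mem_range]
        have hxls' : (M.getD x []).getLast! = c := by rw [hxls, hhdb]
        refine ⟨?_, hxls'⟩
        rcases lt_trichotomy x j with h | h | h
        · exact h
        · exfalso
          rw [h] at hxσ
          omega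
        · exfalso
          have := hσmono j x h hxn hjc hxls'
          omega
    rw [hBcard, Nat.card_Ico]
    omega
  -- first/last bounds from the hypothesis set equation
  have hsetiff : ∀ i, (1 ≤ i ∧ i ≤ S.length ∧ W <+: M.getD (i - 1) []) ↔
      (first ≤ i ∧ i ≤ last) := by
    intro i
    have h := Set.ext_iff.mp hset i
    simpa [Set.mem_Icc, Set.mem_setOf_eq] using h
  have hfirst1 : 1 ≤ first := ((hsetiff first).mpr ⟨le_refl _, hfl⟩).1
  have hlastn : last ≤ S.length := (((hsetiff last).mpr ⟨hfl, le_refl _⟩).2).1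
  -- prefix transfer along frot
  have hpref : ∀ j, j < S.length → ((c :: W) <+: FMAux.frot (M.getD j []) ↔
      ((M.getD j []).getLast! = c ∧ W <+: M.getD j [])) := by
    intro j hj
    have hdl : W <+: (M.getD j []).dropLast ↔ W <+: M.getD j [] := by
      rw [List.dropLast_eq_take, List.prefix_take_iff]
      constructor
      · exact fun h => h.1
      · intro h
        exact ⟨h, by rw [hrowlen j hj]; omega⟩
    simp only [FMAux.frot]
    rw [List.cons_prefix_cons]
    constructor
    · rintro ⟨h1, h2⟩
      exact ⟨h1.symm, hdl.mp h2⟩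
    · rintro ⟨h1, h2⟩
      exact ⟨h1.symm, hdl.mpr h2⟩
  -- final extensional argument
  ext i
  simp only [Set.mem_setOf_eq, Set.mem_Icc]
  rw [hocc (first - 1) (by omega), hocc last (by omega)]
  constructor
  · rintro ⟨hi1, hin, hpre⟩
    have hjn : i - 1 < S.length := by omega
    have hhd : (M.getD (i - 1) []).head! = c := by
      obtain ⟨a, t, hat⟩ := List.exists_cons_of_ne_nil (hrowne (i - 1) hjn)
      rw [hat] at hpre ⊢
      rw [List.head!_cons]
      exact (List.cons_prefix_cons.mp hpre).1.symm
    obtain ⟨x, hxn, hxσ, hxls⟩ := hσsurj (i - 1) hjn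
    have hlsx : (M.getD x []).getLast! = c := by rw [hxls, hhd]
    have hfrx : FMAux.frot (M.getD x []) = M.getD (i - 1) [] := by
      rw [← (hσ x hxn).2, hxσ]
    have hWx : W <+: M.getD x [] := by
      refine ((hpref x hxn).mp ?_).2
      rw [hfrx]
      exact hpre
    have hxint := (hsetiff (x + 1)).mp ⟨by omega, by omega, by simpa using hWx⟩
    have hstarx := hstar x hxn hlsx
    have h1 : occ (first - 1) ≤ occ x := hoccmono _ _ (by omega)
    have h2 : occ x < occ last := hocclt x last (by omega) hlsx
    omega
  · rintro ⟨hlo, hhi⟩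
    have hocclast_le : occ last ≤ S.count c := by
      have := hoccmono last S.length hlastn
      omega
    have hjn : i - 1 < S.length := by omega
    have hhd : (M.getD (i - 1) []).head! = c :=
      (hFh (i - 1) hjn).mpr ⟨by omega, by omega⟩
    obtain ⟨x, hxn, hxσ, hxls⟩ := hσsurj (i - 1) hjn
    have hlsx : (M.getD x []).getLast! = c := by rw [hxls, hhd]
    have hstarx := hstar x hxn hlsx
    have hxge : first - 1 ≤ x := by
      by_contra h
      push_neg at h
      have := hocclt x (first - 1) (by omega) hlsx
      omega
    have hxlt : x < last := by
      by_contra h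
      push_neg at h
      have := hoccmono last x h
      omega
    have hWx : W <+: M.getD x [] := by
      have h := (hsetiff (x + 1)).mpr ⟨by omega, by omega⟩
      simpa using h.2.2
    refine ⟨by omega, by omega, ?_⟩
    have hfrx : FMAux.frot (M.getD x []) = M.getD (i - 1) [] := by
      rw [← (hσ x hxn).2, hxσ]
    rw [← hfrx]
    exact (hpref x hxn).mpr ⟨hlsx, hWx⟩
end

section
/- Let T be a list of length n over a type α, let # be an element of α not occurring in T, set S = T ++ [#], and let P be a nonempty list over α in which # does not occur. Then the number of indices i with 0 ≤ i ≤ n such that P is a prefix of rot i S equals the number of positions at which P occurs as a substring of T, i.e., the number of indices i with 0 ≤ i ≤ n − |P| such that P = (T.drop i).take |P|. -/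
lemma rot_eq {α : Type*} (T : List α) (hash : α) (i : ℕ) (hi : i ≤ T.length) :
    rot i (T ++ [hash]) = T.drop i ++ ([hash] ++ T.take i) := by
  unfold rot
  rw [List.drop_append_of_le_length hi, List.take_append_of_le_length hi, List.append_assoc]

/-- **Occurrences of a pattern vs. rows of the Burrows–Wheeler rotation matrix.**
Let `T` be a list of length `n`, `hash` an element not occurring in `T`, `S = T ++ [hash]`,
and `P` a nonempty list in which `hash` does not occur.  Then the number of indices
`0 ≤ i ≤ n` such that `P` is a prefix of `rot i S` equals the number of indices
`0 ≤ i ≤ n - P.length` such that `P = (T.drop i).take P.length`, i.e. the number of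
positions at which `P` occurs as a substring of `T`. -/
theorem stmt9 {α : Type*} [DecidableEq α] (T : List α) (hash : α) (hhash : hash ∉ T)
    (P : List α) (hP : P ≠ []) (hPhash : hash ∉ P) :
    ((Finset.range (T.length + 1)).filter
        (fun i => P <+: rot i (T ++ [hash]))).card =
      ((Finset.range (T.length - P.length + 1)).filter
        (fun i => P = (T.drop i).take P.length)).card := by
  congr 1
  ext i
  simp only [Finset.mem_filter, Finset.mem_range, Nat.lt_succ_iff]
  constructor
  · rintro ⟨hi, hpre⟩
    rw [rot_eq T hash i hi] at hpre
    -- first show P.length ≤ T.length - i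
    have hlen : P.length ≤ T.length - i := by
      by_contra hlt
      push_neg at hlt
      obtain ⟨t, ht⟩ := hpre
      have hk : T.length - i < (P ++ t).length := by
        simp only [List.length_append]
        omega
      have h1 : (P ++ t)[T.length - i]'hk = P[T.length - i]'hlt :=
        List.getElem_append_left hlt
      have h2 : (P ++ t)[T.length - i]'hk = hash := by
        have hd : (T.drop i).length = T.length - i := List.length_drop
        rw [List.getElem_of_eq ht hk, List.getElem_append_right (by omega)]
        simp [hd]
      exact hPhash (h2 ▸ h1 ▸ List.getElem_mem hlt)
    have hdlen : P.length ≤ (T.drop i).length := by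
      rw [List.length_drop]; exact hlen
    have heq : P = (T.drop i).take P.length := by
      have := List.prefix_iff_eq_take.mp hpre
      rw [List.take_append_of_le_length hdlen] at this
      exact this
    exact ⟨by omega, heq⟩
  · rintro ⟨hi, heq⟩
    have hlen : P.length ≤ T.length - i := by
      have := congrArg List.length heq
      simp [List.length_take, List.length_drop] at this
      omega
    have hi' : i ≤ T.length := by omega
    refine ⟨hi', ?_⟩
    rw [rot_eq T hash i hi']
    have hpre : P <+: T.drop i := by rw [heq]; exact List.take_prefix _ _
    exact hpre.trans (List.prefix_append _ _)
end

section
/- Call a natural number b tagged if b ≥ 128 and untagged if b < 128; a tagged codeword is a nonempty list of natural numbers whose first element is tagged and whose remaining elements are all untagged. Let cw₁, …, cw_m be tagged codewords, let D = cw₁ ++ ⋯ ++ cw_m, and let cw be a tagged codeword occurring at position q in D (i.e., cw is a prefix of D.drop q). Then q is a codeword boundary, i.e., q = |cw₁ ++ ⋯ ++ cw_{j−1}| for some 1 ≤ j ≤ m, and moreover cw is a prefix of cw_j. -/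
/-- A tagged codeword: a nonempty list of natural numbers (bytes) whose first element is
tagged (`≥ 128`) and whose remaining elements are all untagged (`< 128`). -/
def IsTaggedCodeword (l : List ℕ) : Prop :=
  ∃ a t, l = a :: t ∧ 128 ≤ a ∧ ∀ b ∈ t, b < 128

/-- **Self-synchronization of byte-aligned tagged codes.**
Let `cws = [cw₁, …, cw_m]` be a list of tagged codewords, `D` their concatenation, and let
`cw` be a tagged codeword occurring at position `q` of `D` (i.e. `cw` is a prefix of
`D.drop q`).  Then `q` is a codeword boundary: `q` is the length of the concatenation of the
first `j` codewords for some `j < m`, and moreover `cw` is a prefix of `cw_{j+1}`. -/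
theorem stmt10 (cws : List (List ℕ)) (hcws : ∀ cw ∈ cws, IsTaggedCodeword cw)
    (cw : List ℕ) (hcw : IsTaggedCodeword cw) (q : ℕ)
    (hq : cw <+: (cws.flatten).drop q) :
    ∃ j, ∃ hj : j < cws.length,
      q = ((cws.take j).flatten).length ∧ cw <+: cws.get ⟨j, hj⟩ := by
  induction cws generalizing q with
  | nil =>
    simp only [List.flatten_nil, List.drop_nil, List.prefix_nil] at hq
    obtain ⟨a, t, rfl, _, _⟩ := hcw
    simp at hq
  | cons hd tl ih =>
    obtain ⟨a₁, t₁, hhd, ha₁, ht₁⟩ := hcws hd List.mem_cons_self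
    subst hhd
    have hhdlen : 0 < (a₁ :: t₁).length := by simp
    by_cases hqlt : q < (a₁ :: t₁).length
    · -- q must be 0
      obtain ⟨a, t, rfl, ha, ht⟩ := hcw
      have hq0 : q = 0 := by
        by_contra hq0
        have h1 : (((a₁ :: t₁) :: tl).flatten.drop q)[0]'(by
            rw [List.length_drop]
            have := hq.length_le
            simp at this ⊢
            omega) = a := (hq.getElem (by simp)).symm
        rw [List.getElem_drop] at h1
        simp only [List.flatten_cons, Nat.add_zero] at h1
        rw [List.getElem_append_left (by omega)] at h1
        have : (a₁ :: t₁)[q] < 128 := by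
          rw [List.getElem_cons]
          split
          · omega
          · exact ht₁ _ (List.getElem_mem _)
        omega
      subst hq0
      simp only [List.drop_zero, List.flatten_cons] at hq
      have hle : (a :: t).length ≤ (a₁ :: t₁).length := by
        by_contra hlen
        push_neg at hlen
        set hd := a₁ :: t₁ with hhd
        obtain ⟨c, tl', rfl⟩ : ∃ c tl', tl = c :: tl' := by
          cases tl with
          | nil =>
            exfalso
            have := hq.length_le
            simp only [List.flatten_nil, List.append_nil, List.length_cons] at this hlen
            omega
          | cons c tl' => exact ⟨c, tl', rfl⟩
        obtain ⟨a₂, t₂, hc, ha₂, _⟩ := hcws c (by simp)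
        have h1 : (a :: t)[hd.length]'hlen =
            (hd ++ (c :: tl').flatten)[hd.length]'(by
              simp only [List.length_append, List.flatten_cons, hc, List.length_cons]
              omega) := hq.getElem hlen
        rw [List.getElem_append_right (le_refl _)] at h1
        simp only [Nat.sub_self, List.flatten_cons, hc] at h1
        rw [List.getElem_append_left (by simp)] at h1
        simp only [List.getElem_cons_zero] at h1
        have h2 : (a :: t)[hd.length]'hlen < 128 := by
          rw [List.getElem_cons]
          split
          · omega
          · exact ht _ (List.getElem_mem _)
        omega
      refine ⟨0, by simp, by simp, ?_⟩
      simp only [List.get_eq_getElem, List.getElem_cons_zero]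
      exact List.prefix_of_prefix_length_le hq ((a₁ :: t₁).prefix_append tl.flatten) hle
    · push_neg at hqlt
      have hdrop : ((a₁ :: t₁) :: tl).flatten.drop q = tl.flatten.drop (q - (a₁ :: t₁).length) := by
        simp only [List.flatten_cons]
        conv_lhs => rw [show q = (a₁ :: t₁).length + (q - (a₁ :: t₁).length) by omega]
        rw [List.drop_append]
        simp
      rw [hdrop] at hq
      obtain ⟨j, hj, hq', hpre⟩ := ih (fun c hc => hcws c (List.mem_cons_of_mem _ hc)) _ hq
      refine ⟨j + 1, by simpa using Nat.succ_lt_succ hj, ?_, hpre⟩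
      simp only [List.take_succ_cons, List.flatten_cons, List.length_append]
      omega
end

section
/- Call a natural number b tagged if b ≥ 128 and untagged if b < 128; a tagged codeword is a nonempty list of natural numbers whose first element is tagged and whose remaining elements are all untagged. Let W be a type and γ : W → List ℕ a map such that γ(w) is a tagged codeword for every w, and such that for all w ≠ w′, γ(w) is not a prefix of γ(w′). Then for every list t : List W and every w : W, the word w occurs in t (i.e., w is an element of t) if and only if γ(w) occurs as a contiguous sublist (infix) of the concatenation (t.map γ).join. -/
private lemma aux_mem {W : Type*} (γ : W → List ℕ)
    (hcode : ∀ w, IsTaggedCodeword (γ w))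
    (hpre : ∀ w w', w ≠ w' → ¬ (γ w <+: γ w')) :
    ∀ (t : List W) (u v : List ℕ) (w : W),
      u ++ γ w ++ v = (t.map γ).flatten → w ∈ t := by
  intro t
  induction t with
  | nil =>
    intro u v w h
    obtain ⟨a, s, hγ, _, _⟩ := hcode w
    simp [hγ] at h
  | cons w' t' ih =>
    intro u v w h
    simp only [List.map_cons, List.flatten_cons] at h
    have hupre : u <+: γ w' ++ (t'.map γ).flatten := ⟨γ w ++ v, by simpa using h⟩
    have hw'pre : γ w' <+: γ w' ++ (t'.map γ).flatten := List.prefix_append _ _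
    rcases List.prefix_or_prefix_of_prefix hupre hw'pre with hc | hc
    · -- u <+: γ w'
      obtain ⟨e, he⟩ := hc
      have heq : γ w ++ v = e ++ (t'.map γ).flatten := by
        have : u ++ (γ w ++ v) = u ++ (e ++ (t'.map γ).flatten) := by
          rw [← List.append_assoc, h, ← he, List.append_assoc]
        exact List.append_cancel_left this
      cases e with
      | nil =>
        simp only [List.nil_append] at heq
        exact List.mem_cons_of_mem _ (ih [] v w (by simpa using heq))
      | cons b e' =>
        cases u with
        | nil =>
          -- here γ w' = b :: e', and γ w ++ v = γ w' ++ flatten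
          simp only [List.nil_append] at he
          rw [he] at heq
          have h1 : γ w <+: γ w' ++ (t'.map γ).flatten := ⟨v, heq⟩
          rcases List.prefix_or_prefix_of_prefix h1 hw'pre with hd | hd
          · have : w = w' := by
              by_contra hne
              exact hpre w w' hne hd
            exact this ▸ List.mem_cons_self
          · obtain ⟨d, hd⟩ := hd
            cases d with
            | nil =>
              have : w = w' := by
                by_contra hne
                exact hpre w w' hne ⟨[], by simpa using hd.symm⟩
              exact this ▸ List.mem_cons_self
            | cons c d' =>
              exfalso
              -- c < 128 since it is a non-head element of γ w
              obtain ⟨a, s, hγ, ha, hs⟩ := hcode w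
              obtain ⟨a', s', hγ', ha', hs'⟩ := hcode w'
              have hc128 : c < 128 := by
                apply hs
                have : a :: s = a' :: (s' ++ c :: d') := by
                  rw [← hγ, ← hd, hγ']; simp
                have hss : s = s' ++ c :: d' := by
                  injection this with _ h2
                rw [hss]; simp
              -- c ≥ 128 since it heads (t'.map γ).flatten
              have hflat : c :: (d' ++ v) = (t'.map γ).flatten := by
                rw [← hd, List.append_assoc] at heq
                simpa using List.append_cancel_left heq
              cases t' with
              | nil => simp at hflat
              | cons w'' t'' =>
                obtain ⟨a'', s'', hγ'', ha'', _⟩ := hcode w''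
                simp only [List.map_cons, List.flatten_cons, hγ''] at hflat
                have : c = a'' := by
                  have := hflat
                  simp at this
                  exact this.1
                omega
        | cons x u' =>
          exfalso
          obtain ⟨a, s, hγ, ha, hs⟩ := hcode w
          obtain ⟨a', s', hγ', ha', hs'⟩ := hcode w'
          -- b ∈ s' so b < 128, but b = a ≥ 128
          have hb128 : b < 128 := by
            apply hs'
            have : a' :: s' = x :: (u' ++ b :: e') := by
              rw [← hγ', ← he]; simp
            have hss : s' = u' ++ b :: e' := by injection this with _ h2
            rw [hss]; simp
          have : a = b := by
            rw [hγ] at heq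
            injection heq with h1 _
          omega
    · -- γ w' <+: u
      obtain ⟨u'', rfl⟩ := hc
      have : u'' ++ γ w ++ v = (t'.map γ).flatten := by
        have : γ w' ++ (u'' ++ γ w ++ v) = γ w' ++ (t'.map γ).flatten := by
          rw [← h]; simp
        exact List.append_cancel_left this
      exact List.mem_cons_of_mem _ (ih u'' v w this)

/-- **Correctness of the digested text of the WFM-index.**
Let `γ` assign to every word `w` a tagged codeword `γ w`, in such a way that for distinct
words `w ≠ w'` the codeword `γ w` is not a prefix of `γ w'`.  Then for every list of words
`t` and every word `w`, the word `w` occurs in `t` iff `γ w` occurs as a contiguous sublist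
(infix) of the concatenation `(t.map γ).flatten`. -/
theorem stmt11 {W : Type*} (γ : W → List ℕ)
    (hcode : ∀ w, IsTaggedCodeword (γ w))
    (hpre : ∀ w w', w ≠ w' → ¬ (γ w <+: γ w')) :
    ∀ (t : List W) (w : W), w ∈ t ↔ γ w <:+: (t.map γ).flatten := by
  intro t w
  constructor
  · intro hw
    exact List.infix_of_mem_flatten (List.mem_map_of_mem (f := γ) hw)
  · rintro ⟨u, v, huv⟩
    exact aux_mem γ hcode hpre t u v w (by simpa using huv)
end

section
/- Let α be a linearly ordered type, let L ≥ 1, and let u and v be lists of blocks, where each block is a list over α of length exactly L. Then (u.join) <_lex (v.join) if and only if u <_lex v, where lists of blocks are compared lexicographically using the order <_lex on individual blocks. -/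
lemma lex_cons_cons_iff {α : Type*} {r : α → α → Prop} {x y : α} {l₁ l₂ : List α} :
    List.Lex r (x :: l₁) (y :: l₂) ↔ r x y ∨ (x = y ∧ List.Lex r l₁ l₂) := by
  constructor
  · intro h
    cases h with
    | cons h => exact Or.inr ⟨rfl, h⟩
    | rel h => exact Or.inl h
  · rintro (h | ⟨rfl, h⟩)
    · exact List.Lex.rel h
    · exact List.Lex.cons h

lemma lex_append_iff_s13 {α : Type*} [LinearOrder α] :
    ∀ (a b : List α), a.length = b.length → ∀ (s t : List α),
      List.Lex (· < ·) (a ++ s) (b ++ t) ↔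
        List.Lex (· < ·) a b ∨ (a = b ∧ List.Lex (· < ·) s t)
  | [], [], _, s, t => by simp [List.not_lex_nil]
  | x :: a, y :: b, h, s, t => by
    simp only [List.length_cons, Nat.add_right_cancel_iff] at h
    simp only [List.cons_append, lex_cons_cons_iff, lex_append_iff_s13 a b h s t,
      List.cons.injEq]
    tauto

/-- **Blockwise lexicographic comparison.**
Let `L ≥ 1` and let `u` and `v` be lists of blocks, each block being a list over `α` of
length exactly `L`.  Then the concatenation `u.flatten` is lexicographically smaller than
`v.flatten` iff `u` is smaller than `v` in the lexicographic order on lists of blocks,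
where blocks are compared by `<_lex`. -/
theorem stmt13 {α : Type*} [LinearOrder α] (L : ℕ) (hL : 1 ≤ L)
    (u v : List (List α))
    (hu : ∀ b ∈ u, b.length = L) (hv : ∀ b ∈ v, b.length = L) :
    List.Lex (· < ·) u.flatten v.flatten ↔
      List.Lex (fun a b => List.Lex (· < ·) a b) u v := by
  induction u generalizing v with
  | nil =>
    cases v with
    | nil => simp [List.not_lex_nil]
    | cons b v =>
      have hb : b.length = L := hv b (by simp)
      have hbne : b ≠ [] := by
        intro h; rw [h] at hb; simp at hb; omega
      constructor
      · intro _; exact List.Lex.nil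
      · intro _
        cases b with
        | nil => exact absurd rfl hbne
        | cons x xs => exact List.Lex.nil
  | cons a u ih =>
    cases v with
    | nil => simp [List.not_lex_nil]
    | cons b v =>
      have ha : a.length = L := hu a (by simp)
      have hb : b.length = L := hv b (by simp)
      simp only [List.flatten_cons]
      rw [lex_append_iff_s13 a b (ha.trans hb.symm),
        lex_cons_cons_iff (r := fun a b => List.Lex (· < ·) a b), ih v (fun c hc => hu c (by simp [hc])) (fun c hc => hv c (by simp [hc]))]
end

section
/- Let s₁ <_lex s₂ <_lex ⋯ <_lex s_K (K ≥ 1) be distinct bit strings (lists over Bool with false < true), pairwise non-prefix (no s_i is a prefix of s_j for i ≠ j), sorted in increasing lexicographic order. For 1 ≤ i < K let m_i = lcp(s_i, s_{i+1}) + 1 be the first mismatching position of s_i and s_{i+1} (so the m_i-th bit of s_i is 0 and the m_i-th bit of s_{i+1} is 1). Given a query bit string P, write P⟨ℓ⟩ for the ℓ-th bit of P if ℓ ≤ |P| and 0 otherwise, and run the following procedure: initialize x := 1 and i := 1; while i ≤ K−1, set ℓ := m_i; if P⟨ℓ⟩ = 1 then set x := i+1 and i := i+1; otherwise leave x unchanged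 and set i to the smallest index i′ with i < i′ ≤ K−1 and m_{i′} < ℓ, or terminate if no such index exists. Then the final value of x satisfies lcp(P, s_x) = max over 1 ≤ j ≤ K of lcp(P, s_j). -/
/-- `lcpLen u v` is the length of the longest common prefix of the lists `u` and `v`. -/
def lcpLen {α : Type*} [DecidableEq α] : List α → List α → ℕ
  | a :: u, b :: v => if a = b then lcpLen u v + 1 else 0
  | _, _ => 0

/-- The loop of Ferguson's array-based Patricia-tree search.  State: `x` (current candidate,
`1`-based index) and `i` (current scan position).  While `i ≤ K - 1`: set `ℓ := m i`;
if the `ℓ`-th bit of the pattern (`Pbit ℓ`) is `1` then `x := i + 1` and `i := i + 1`;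
otherwise `x` is unchanged and `i` jumps to the smallest `i'` with `i < i' ≤ K - 1` and
`m i' < ℓ`, terminating if no such index exists.  The `fuel` argument (any value `≥ K`
suffices, since `i` strictly increases) makes the recursion structural. -/
def fergLoop (K : ℕ) (m : ℕ → ℕ) (Pbit : ℕ → Bool) : ℕ → ℕ → ℕ → ℕ
  | 0, x, _ => x
  | fuel + 1, x, i =>
    if i ≤ K - 1 then
      if Pbit (m i) then
        fergLoop K m Pbit fuel (i + 1) (i + 1)
      else
        match (List.range' (i + 1) (K - 1 - i)).find? (fun i' => m i' < m i) with
        | some i' => fergLoop K m Pbit fuel x i'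
        | none => x
    else x

/-- Ferguson's search procedure: initialize `x := 1`, `i := 1` and run the loop. -/
def ferg (K : ℕ) (m : ℕ → ℕ) (Pbit : ℕ → Bool) : ℕ :=
  fergLoop K m Pbit K 1 1

namespace Stmt14Aux

variable {α : Type*} [DecidableEq α]

theorem lcpLen_nil_left (v : List α) : lcpLen ([] : List α) v = 0 := by cases v <;> rfl

theorem lcpLen_nil_right (u : List α) : lcpLen u ([] : List α) = 0 := by cases u <;> rfl

theorem lcpLen_cons (a b : α) (u v : List α) :
    lcpLen (a::u) (b::v) = if a = b then lcpLen u v + 1 else 0 := rfl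

theorem lcpLen_le_left : ∀ u v : List α, lcpLen u v ≤ u.length := by
  intro u
  induction u with
  | nil => intro v; rw [lcpLen_nil_left]; simp
  | cons a u ih =>
    intro v
    cases v with
    | nil => rw [lcpLen_nil_right]; simp
    | cons b v =>
      rw [lcpLen_cons]
      by_cases h : a = b
      · rw [if_pos h]; simpa using ih v
      · rw [if_neg h]; simp

theorem lcpLen_comm : ∀ u v : List α, lcpLen u v = lcpLen v u := by
  intro u
  induction u with
  | nil => intro v; rw [lcpLen_nil_left, lcpLen_nil_right]
  | cons a u ih =>
    intro v
    cases v with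
    | nil => rw [lcpLen_nil_left, lcpLen_nil_right]
    | cons b v =>
      rw [lcpLen_cons, lcpLen_cons, ih]
      by_cases h : a = b
      · rw [if_pos h, if_pos h.symm]
      · rw [if_neg h, if_neg (fun hh => h hh.symm)]

theorem lcpLen_get : ∀ (u v : List α) (k : ℕ), k < lcpLen u v → u[k]? = v[k]? := by
  intro u
  induction u with
  | nil => intro v k h; rw [lcpLen_nil_left] at h; omega
  | cons a u ih =>
    intro v k h
    cases v with
    | nil => rw [lcpLen_nil_right] at h; omega
    | cons b v =>
      rw [lcpLen_cons] at h
      by_cases hab : a = b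
      · subst hab
        rw [if_pos rfl] at h
        cases k with
        | zero => simp
        | succ k => simpa using ih v k (by omega)
      · rw [if_neg hab] at h; omega

theorem le_lcpLen : ∀ (u v : List α) (n : ℕ),
    (∀ k, k < n → u[k]? = v[k]?) → n ≤ u.length → n ≤ lcpLen u v := by
  intro u
  induction u with
  | nil => intro v n _ hn; rw [lcpLen_nil_left]; simpa using hn
  | cons a u ih =>
    intro v n hk hn
    cases n with
    | zero => omega
    | succ n =>
      cases v with
      | nil => have := hk 0 (by omega); simp at this
      | cons b v =>
        have h0 := hk 0 (by omega)
        simp only [List.getElem?_cons_zero, Option.some.injEq] at h0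
        subst h0
        rw [lcpLen_cons, if_pos rfl]
        have : n ≤ lcpLen u v :=
          ih v n (fun k hk' => by simpa using hk (k+1) (by omega)) (by simpa using hn)
        omega

theorem lcpLen_min (u v w : List α) : min (lcpLen u v) (lcpLen v w) ≤ lcpLen u w :=
  le_lcpLen u w _
    (fun k hk =>
      (lcpLen_get u v k (lt_of_lt_of_le hk (min_le_left _ _))).trans
        (lcpLen_get v w k (lt_of_lt_of_le hk (min_le_right _ _))))
    (le_trans (min_le_left _ _) (lcpLen_le_left u v))

theorem lex_lcp : ∀ {u v : List Bool}, List.Lex (· < ·) u v → ¬ (u <+: v) →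
    u[lcpLen u v]? = some false ∧ v[lcpLen u v]? = some true := by
  intro u v h
  induction h with
  | nil => intro hp; exact absurd List.nil_prefix hp
  | @cons a l₁ l₂ h ih =>
    intro hp
    have hp' : ¬ (l₁ <+: l₂) := fun hh => hp (List.cons_prefix_cons.mpr ⟨rfl, hh⟩)
    have := ih hp'
    rw [lcpLen_cons, if_pos rfl]
    simpa using this
  | @rel a l₁ b l₂ hab =>
    intro _
    obtain ⟨ha, hb⟩ := Bool.lt_iff.mp hab
    subst ha; subst hb
    rw [lcpLen_cons, if_neg (by simp)]
    simp

theorem find?_before (p : ℕ → Bool) : ∀ (n a b : ℕ), (List.range' a n).find? p = some b →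
    ∀ t, a ≤ t → t < b → p t = false := by
  intro n
  induction n with
  | zero => intro a b h; simp at h
  | succ n ih =>
    intro a b h t hat htb
    rw [List.range'_succ] at h
    by_cases hpa : p a = true
    · rw [List.find?_cons_of_pos hpa] at h
      injection h with h
      omega
    · rw [List.find?_cons_of_neg hpa] at h
      rcases Nat.eq_or_lt_of_le hat with rfl | h'
      · simpa using hpa
      · exact ih (a+1) b h t (by omega) htb


section Seq

variable (K : ℕ) (s : ℕ → List Bool)
variable (hnp : ∀ i j, 1 ≤ i → i ≤ K → 1 ≤ j → j ≤ K → i ≠ j → ¬ (s i <+: s j))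
variable (hsorted : ∀ i, 1 ≤ i → i < K → List.Lex (· < ·) (s i) (s (i + 1)))

include hsorted in
theorem lex_chain : ∀ a b : ℕ, 1 ≤ a → a < b → b ≤ K → List.Lex (· < ·) (s a) (s b) := by
  intro a b
  induction b with
  | zero => omega
  | succ b ih =>
    intro ha hab hbK
    rcases Nat.lt_or_ge a b with h | h
    · exact List.lex_trans lt_trans (ih ha h (by omega)) (hsorted b (by omega) (by omega))
    · have : a = b := by omega
      subst this
      exact hsorted a ha (by omega)

theorem lcp_chain : ∀ (d j n : ℕ),
    (∀ t, j ≤ t → t < j + d → n ≤ lcpLen (s t) (s (t+1))) →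
    n ≤ (s j).length → n ≤ lcpLen (s j) (s (j + d)) := by
  intro d
  induction d with
  | zero => intro j n _ hn; exact le_lcpLen _ _ _ (fun k _ => rfl) hn
  | succ d ih =>
    intro j n h hn
    have h1 : n ≤ lcpLen (s j) (s (j + d)) := ih j n (fun t ht ht' => h t ht (by omega)) hn
    have h2 : n ≤ lcpLen (s (j+d)) (s (j+d+1)) := h (j+d) (by omega) (by omega)
    have h3 := lcpLen_min (s j) (s (j+d)) (s (j+d+1))
    have he : j + (d+1) = j + d + 1 := by omega
    rw [he]
    omega

include hnp hsorted in
theorem pair_facts (a b : ℕ) (h1 : 1 ≤ a) (h2 : a < b) (h3 : b ≤ K) :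
    (s a)[lcpLen (s a) (s b)]? = some false ∧ (s b)[lcpLen (s a) (s b)]? = some true :=
  lex_lcp (lex_chain K s hsorted a b h1 h2 h3)
    (hnp a b h1 (by omega) (by omega) h3 (by omega))

variable (P : List Bool)

include hnp hsorted in
/-- The key "skip" lemma for the bit-0 case. -/
theorem skip (i j : ℕ) (h1 : 1 ≤ i) (h2 : i < K)
    (hPb : P.getD (lcpLen (s i) (s (i+1))) false = false)
    (hj1 : i < j) (hj2 : j ≤ K)
    (ht : ∀ t, i < t → t < j → lcpLen (s i) (s (i+1)) ≤ lcpLen (s t) (s (t+1))) :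
    lcpLen P (s j) ≤ lcpLen P (s i) := by
  set ci := lcpLen (s i) (s (i+1)) with hci
  obtain ⟨pf1, pf2⟩ := pair_facts K s hnp hsorted i (i+1) h1 (by omega) (by omega)
  -- lcpLen P (s (i+1)) ≤ ci
  have hL1 : lcpLen P (s (i+1)) ≤ ci := by
    by_contra h
    push_neg at h
    have hg := lcpLen_get P (s (i+1)) ci h
    rw [pf2] at hg
    rw [List.getD_eq_getElem?_getD, hg] at hPb
    simp at hPb
  -- lcpLen P (s (i+1)) ≤ lcpLen P (s i)
  have hLi : lcpLen P (s (i+1)) ≤ lcpLen P (s i) := by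
    have hmin := lcpLen_min P (s (i+1)) (s i)
    rw [lcpLen_comm (s (i+1)) (s i)] at hmin
    omega
  rcases Nat.eq_or_lt_of_le hj1 with rfl | hj1'
  · exact hLi
  · -- chain bound:  ci + 1 ≤ lcpLen (s (i+1)) (s j)
    have hch : ci ≤ lcpLen (s (i+1)) (s j) := by
      have hlen : ci ≤ (s (i+1)).length := by
        have := lcpLen_le_left (s (i+1)) (s i)
        rw [lcpLen_comm (s (i+1)) (s i)] at this
        omega
      have := lcp_chain s (j - (i+1)) (i+1) ci
        (fun t ht1 ht2 => ht t (by omega) (by omega)) hlen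
      have he : i + 1 + (j - (i+1)) = j := by omega
      rw [he] at this
      exact this
    have hch' : ci + 1 ≤ lcpLen (s (i+1)) (s j) := by
      rcases Nat.lt_or_ge ci (lcpLen (s (i+1)) (s j)) with h | h
      · omega
      · exfalso
        have heq : lcpLen (s (i+1)) (s j) = ci := by omega
        obtain ⟨pg1, _⟩ := pair_facts K s hnp hsorted (i+1) j (by omega) hj1' hj2
        rw [heq, pf2] at pg1
        simp at pg1
    -- lcpLen P (s j) ≤ lcpLen P (s (i+1))
    have hLj : lcpLen P (s j) ≤ lcpLen P (s (i+1)) := by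
      by_contra h
      push_neg at h
      have hmin := lcpLen_min P (s j) (s (i+1))
      rw [lcpLen_comm (s j) (s (i+1))] at hmin
      omega
    omega

theorem fergLoop_succ (K : ℕ) (m : ℕ → ℕ) (Pbit : ℕ → Bool) (fuel x i : ℕ) :
    fergLoop K m Pbit (fuel+1) x i =
      if i ≤ K - 1 then
        if Pbit (m i) then fergLoop K m Pbit fuel (i + 1) (i + 1)
        else match (List.range' (i + 1) (K - 1 - i)).find? (fun i' => m i' < m i) with
          | some i' => fergLoop K m Pbit fuel x i'
          | none => x
      else x := rfl

include hnp hsorted in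
theorem loop : ∀ (fuel x i : ℕ), 1 ≤ K → 1 ≤ x → x ≤ i → x ≤ K → K ≤ fuel + i →
    (∀ j, 1 ≤ j → j ≤ i → j ≤ K → lcpLen P (s j) ≤ lcpLen P (s x)) →
    (∀ t, x ≤ t → t < i → lcpLen (s i) (s (i+1)) < lcpLen (s t) (s (t+1))) →
    1 ≤ fergLoop K (fun i => lcpLen (s i) (s (i + 1)) + 1) (fun ℓ => P.getD (ℓ - 1) false) fuel x i ∧
      fergLoop K (fun i => lcpLen (s i) (s (i + 1)) + 1) (fun ℓ => P.getD (ℓ - 1) false) fuel x i ≤ K ∧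
      ∀ j, 1 ≤ j → j ≤ K → lcpLen P (s j) ≤
        lcpLen P (s (fergLoop K (fun i => lcpLen (s i) (s (i + 1)) + 1)
          (fun ℓ => P.getD (ℓ - 1) false) fuel x i)) := by
  intro fuel
  induction fuel with
  | zero =>
    intro x i hK hx1 hxi hxK hfi hB _
    rw [show fergLoop K (fun i => lcpLen (s i) (s (i + 1)) + 1)
      (fun ℓ => P.getD (ℓ - 1) false) 0 x i = x from rfl]
    exact ⟨hx1, hxK, fun j hj1 hj2 => hB j hj1 (by omega) hj2⟩
  | succ fuel ih =>
    intro x i hK hx1 hxi hxK hfi hB hF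
    simp only [fergLoop_succ, Nat.add_sub_cancel]
    by_cases hiK : i ≤ K - 1
    case neg =>
      rw [if_neg hiK]
      exact ⟨hx1, hxK, fun j hj1 hj2 => hB j hj1 (by omega) hj2⟩
    case pos =>
      rw [if_pos hiK]
      have hi1 : 1 ≤ i := le_trans hx1 hxi
      have hiK' : i < K := by omega
      obtain ⟨pf1, pf2⟩ := pair_facts K s hnp hsorted i (i+1) hi1 (by omega) (by omega)
      by_cases hPb : P.getD (lcpLen (s i) (s (i+1))) false = true
      · rw [if_pos hPb]
        have hkey : (s x)[lcpLen (s i) (s (i+1))]? = some false ∧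
            lcpLen (s i) (s (i+1)) ≤ lcpLen (s x) (s (i+1)) := by
          rcases Nat.eq_or_lt_of_le hxi with hxe | hxi'
          · rw [hxe]
            exact ⟨pf1, le_rfl⟩
          · have hlen : lcpLen (s i) (s (i+1)) + 1 ≤ (s x).length := by
              have h1 := hF x le_rfl hxi'
              have h2 := lcpLen_le_left (s x) (s (x+1))
              omega
            have hch : lcpLen (s i) (s (i+1)) + 1 ≤ lcpLen (s x) (s i) := by
              have := lcp_chain s (i - x) x (lcpLen (s i) (s (i+1)) + 1)
                (fun t ht1 ht2 => by have := hF t ht1 (by omega); omega) hlen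
              have he : x + (i - x) = i := by omega
              rw [he] at this
              exact this
            have hmin := lcpLen_min (s x) (s i) (s (i+1))
            refine ⟨?_, by omega⟩
            rw [lcpLen_get (s x) (s i) (lcpLen (s i) (s (i+1))) (by omega)]
            exact pf1
        have hLx : lcpLen P (s x) ≤ lcpLen (s i) (s (i+1)) := by
          by_contra h
          push_neg at h
          have hg := lcpLen_get P (s x) (lcpLen (s i) (s (i+1))) h
          rw [hkey.1] at hg
          rw [List.getD_eq_getElem?_getD, hg] at hPb
          simp at hPb
        have hnew : lcpLen P (s x) ≤ lcpLen P (s (i+1)) := by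
          have hmin := lcpLen_min P (s x) (s (i+1))
          have := hkey.2
          omega
        refine ih (i+1) (i+1) hK (by omega) le_rfl (by omega) (by omega) ?_ (by omega)
        intro j hj1 hj2 hj3
        rcases Nat.eq_or_lt_of_le hj2 with rfl | hj2'
        · exact le_rfl
        · exact le_trans (hB j hj1 (by omega) hj3) hnew
      · have hPb' : P.getD (lcpLen (s i) (s (i+1))) false = false := by
          cases h : P.getD (lcpLen (s i) (s (i+1))) false
          · rfl
          · exact absurd h hPb
        rw [if_neg hPb]
        split
        next i' hfind =>
          have hmem := List.mem_of_find?_eq_some hfind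
          rw [List.mem_range'_1] at hmem
          have hi'1 : i + 1 ≤ i' := hmem.1
          have hi'2 : i' < K := by
            have := hmem.2
            omega
          have hpred := List.find?_some hfind
          simp only [decide_eq_true_eq] at hpred
          have hlt : lcpLen (s i') (s (i'+1)) < lcpLen (s i) (s (i+1)) := by omega
          have hbef : ∀ t, i < t → t < i' → lcpLen (s i) (s (i+1)) ≤ lcpLen (s t) (s (t+1)) := by
            intro t ht1 ht2
            have := find?_before _ _ _ _ hfind t (by omega) ht2
            simp only [decide_eq_false_iff_not] at this
            omega
          refine ih x i' hK hx1 (by omega) hxK (by omega) ?_ ?_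
          · intro j hj1 hj2 hj3
            rcases le_or_gt j i with hji | hji
            · exact hB j hj1 hji hj3
            · exact le_trans (skip K s hnp hsorted P i j hi1 hiK' hPb' hji hj3
                (fun t ht1 ht2 => hbef t ht1 (by omega)))
                (hB i hi1 le_rfl (by omega))
          · intro t ht1 ht2
            rcases Nat.lt_trichotomy t i with h | h | h
            · have := hF t ht1 h
              omega
            · rw [h]
              exact hlt
            · have := hbef t h (by omega)
              omega
        next hfind =>
          refine ⟨hx1, hxK, fun j hj1 hj2 => ?_⟩
          rcases le_or_gt j i with hji | hji
          · exact hB j hj1 hji hj2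
          · refine le_trans (skip K s hnp hsorted P i j hi1 hiK' hPb' hji hj2 ?_)
              (hB i hi1 le_rfl (by omega))
            intro t ht1 ht2
            have hmem : t ∈ List.range' (i+1) (K-1-i) := by
              rw [List.mem_range'_1]
              omega
            have := List.find?_eq_none.mp hfind t hmem
            simp only [decide_eq_true_eq] at this
            omega

end Seq

end Stmt14Aux

/-- **Correctness of the first phase of Ferguson's Patricia-tree search.**
Let `s 1 <_lex s 2 <_lex ⋯ <_lex s K` (`K ≥ 1`) be bit strings (lists over `Bool`, with
`false < true`), pairwise non-prefix, sorted in increasing lexicographic order, and for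
`1 ≤ i < K` let `m i = lcpLen (s i) (s (i+1)) + 1` be the first mismatching position of
`s i` and `s (i+1)`.  For a query bit string `P`, let `P⟨ℓ⟩ = P.getD (ℓ - 1) false` be its
`ℓ`-th bit (`0` when `ℓ > P.length`).  Then the index `x` returned by the procedure
satisfies `lcpLen P (s x) = max_{1 ≤ j ≤ K} lcpLen P (s j)`. -/


theorem stmt14 (K : ℕ) (hK : 1 ≤ K) (s : ℕ → List Bool)
    (hnp : ∀ i j, 1 ≤ i → i ≤ K → 1 ≤ j → j ≤ K → i ≠ j → ¬ (s i <+: s j))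
    (hsorted : ∀ i, 1 ≤ i → i < K → List.Lex (· < ·) (s i) (s (i + 1)))
    (P : List Bool) :
    lcpLen P (s (ferg K (fun i => lcpLen (s i) (s (i + 1)) + 1)
        (fun ℓ => P.getD (ℓ - 1) false))) =
      (Finset.Icc 1 K).sup' (Finset.nonempty_Icc.mpr hK)
        (fun j => lcpLen P (s j)) := by
  obtain ⟨h1, h2, h3⟩ := Stmt14Aux.loop K s hnp hsorted P K 1 1 hK le_rfl le_rfl hK
    (by omega)
    (fun j hj1 hj2 _ => by
      have hj : j = 1 := by omega
      rw [hj])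
    (fun t ht1 ht2 => by omega)
  rw [ferg]
  refine le_antisymm (Finset.le_sup' (fun j => lcpLen P (s j)) (Finset.mem_Icc.mpr ⟨h1, h2⟩))
    (Finset.sup'_le _ _ fun j hj => ?_)
  obtain ⟨hj1, hj2⟩ := Finset.mem_Icc.mp hj
  exact h3 j hj1 hj2
end

section
/- Let T be a list of length n over a linearly ordered type α, and let # be an element of α strictly smaller than every character of T; set S = T ++ [#]. Then for all indices 0 ≤ i < j ≤ n, rot i S <_lex rot j S if and only if S.drop i <_lex S.drop j. Consequently, the lexicographic order of the n+1 rotations of S coincides with the lexicographic order of the corresponding suffixes of S. -/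
theorem lex_append_iff_s15 {α : Type*} (r : α → α → Prop) :
    ∀ (u v a b : List α), ¬ u <+: v → ¬ v <+: u →
      (List.Lex r (u ++ a) (v ++ b) ↔ List.Lex r u v)
  | [], v, _, _, h1, _ => absurd (List.nil_prefix) h1
  | _ :: _, [], _, _, _, h2 => absurd (List.nil_prefix) h2
  | x :: u, y :: v, a, b, h1, h2 => by
    simp only [List.cons_append]
    constructor
    · intro h
      cases h with
      | rel hr => exact List.Lex.rel hr
      | cons h' =>
        refine List.Lex.cons ?_
        rw [lex_append_iff_s15 r u v a b] at h'
        · exact h'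
        · intro hp; exact h1 (by simpa [List.cons_prefix_cons] using hp)
        · intro hp; exact h2 (by simpa [List.cons_prefix_cons] using hp)
    · intro h
      cases h with
      | rel hr => exact List.Lex.rel hr
      | cons h' =>
        refine List.Lex.cons ?_
        rw [lex_append_iff_s15 r u v a b]
        · exact h'
        · intro hp; exact h1 (by simpa [List.cons_prefix_cons] using hp)
        · intro hp; exact h2 (by simpa [List.cons_prefix_cons] using hp)

/-- **Rotations vs. suffixes with a minimal sentinel.**
Let `T` be a list of length `n` and let `hash` be strictly smaller than every character of
`T`; set `S = T ++ [hash]`.  Then for all `0 ≤ i < j ≤ n`,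
`rot i S <_lex rot j S` iff `S.drop i <_lex S.drop j`: the lexicographic order of the
rotations of `S` coincides with that of the corresponding suffixes of `S`. -/
theorem stmt15 {α : Type*} [LinearOrder α] (T : List α) (hash : α)
    (hhash : ∀ c ∈ T, hash < c)
    (i j : ℕ) (hij : i < j) (hj : j ≤ T.length) :
    (List.Lex (· < ·) (rot i (T ++ [hash])) (rot j (T ++ [hash])) ↔
      List.Lex (· < ·) ((T ++ [hash]).drop i) ((T ++ [hash]).drop j)) := by
  set S := T ++ [hash] with hS
  have hlen : S.length = T.length + 1 := by simp [hS]
  have hlv : (S.drop j).length = T.length + 1 - j := by simp [hlen]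
  have hlu : (S.drop i).length = T.length + 1 - i := by simp [hlen]
  have h1 : ¬ S.drop i <+: S.drop j := by
    intro hp
    have := hp.length_le
    omega
  have h2 : ¬ S.drop j <+: S.drop i := by
    intro hp
    have hk : T.length - j < (S.drop j).length := by omega
    have hk' : T.length - j < (S.drop i).length := by omega
    have e1 : (S.drop j)[T.length - j] = hash := by
      rw [List.getElem_drop]
      have : j + (T.length - j) = T.length := by omega
      simp [this, hS]
    have e2 : (S.drop i)[T.length - j]'hk' = hash := by
      rw [← e1]; exact (hp.getElem hk).symm
    rw [List.getElem_drop] at e2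
    have hlt : i + (T.length - j) < T.length := by omega
    have : S[i + (T.length - j)]'(by omega) = T[i + (T.length - j)]'hlt := by
      simp [hS, List.getElem_append, hlt]
    rw [this] at e2
    exact absurd (e2 ▸ hhash _ (List.getElem_mem hlt)) (lt_irrefl hash)
  unfold rot
  exact lex_append_iff_s15 _ _ _ _ _ h1 h2
end

section
/- For a natural number x ≥ 1, define enc(x) : List ℕ as follows: write x in base 128 as digits d_k, d_{k−1}, …, d_0 with most significant digit d_k ≥ 1 first, and set enc(x) = [d_k + 128, d_{k−1}, …, d_0]. Then the map from List {x : ℕ // x ≥ 1} to List ℕ sending a list l of positive integers to (l.map enc).join is injective; i.e., the continuation-bit code is uniquely decodable on streams. -/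
/-- The continuation-bit code of a positive integer `x`: write `x` in base 128 as digits
`d_k, d_{k-1}, …, d_0` (most significant digit `d_k ≥ 1` first) and output
`[d_k + 128, d_{k-1}, …, d_0]`, i.e. the most significant byte is tagged by adding `128`.
(`Nat.digits 128 x` lists the base-128 digits least significant first.) -/
def encCB (x : ℕ) : List ℕ :=
  match (Nat.digits 128 x).reverse with
  | [] => []
  | d :: ds => (d + 128) :: ds

lemma encCB_eq (x : ℕ) (hx : 1 ≤ x) :
    ∃ d ds, (Nat.digits 128 x).reverse = d :: ds ∧ encCB x = (d + 128) :: ds := by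
  have h : Nat.digits 128 x ≠ [] := Nat.digits_ne_nil_iff_ne_zero.mpr (by omega)
  have h' : (Nat.digits 128 x).reverse ≠ [] := by simpa using h
  obtain ⟨d, ds, hds⟩ := List.exists_cons_of_ne_nil h'
  refine ⟨d, ds, hds, ?_⟩
  unfold encCB
  rw [hds]

lemma encCB_spec (x : ℕ) (hx : 1 ≤ x) :
    ∃ c cs, encCB x = c :: cs ∧ 128 ≤ c ∧ ∀ e ∈ cs, e < 128 := by
  obtain ⟨d, ds, hrev, henc⟩ := encCB_eq x hx
  refine ⟨d + 128, ds, henc, by omega, fun e he => ?_⟩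
  have : e ∈ Nat.digits 128 x := by
    have : e ∈ (Nat.digits 128 x).reverse := by rw [hrev]; exact List.mem_cons_of_mem _ he
    simpa using this
  exact Nat.digits_lt_base (by norm_num) this

lemma encCB_inj {x y : ℕ} (hx : 1 ≤ x) (hy : 1 ≤ y) (h : encCB x = encCB y) : x = y := by
  obtain ⟨d, ds, hrx, hex⟩ := encCB_eq x hx
  obtain ⟨e, es, hry, hey⟩ := encCB_eq y hy
  rw [hex, hey] at h
  have hd : d = e := by
    have := List.head_eq_of_cons_eq h; omega
  have hds : ds = es := List.tail_eq_of_cons_eq h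
  have hdig : Nat.digits 128 x = Nat.digits 128 y := by
    have : (Nat.digits 128 x).reverse = (Nat.digits 128 y).reverse := by
      rw [hrx, hry, hd, hds]
    simpa using List.reverse_injective this
  have := congrArg (Nat.ofDigits 128) hdig
  simpa [Nat.ofDigits_digits] using this

lemma no_shorter (s1 s2 t1 t2 : List ℕ) (h : s1 ++ t1 = s2 ++ t2)
    (hlen : s1.length < s2.length) (hs1 : s1 ≠ [])
    (hs2 : ∀ i (hi : i < s2.length), 1 ≤ i → s2[i] < 128)
    (ht1 : t1 = [] ∨ 128 ≤ t1.headI) : False := by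
  have hlens : s1.length + t1.length = s2.length + t2.length := by
    have := congrArg List.length h
    simpa using this
  have ht1ne : t1 ≠ [] := by
    intro h0; rw [h0] at hlens; simp at hlens; omega
  obtain ⟨a, t, hat⟩ := List.exists_cons_of_ne_nil ht1ne
  have ha : 128 ≤ a := by
    rcases ht1 with h0 | h0
    · exact absurd h0 ht1ne
    · rw [hat] at h0; simpa using h0
  have hn1 : 1 ≤ s1.length := by
    cases s1 with
    | nil => exact absurd rfl hs1
    | cons _ _ => simp
  have h1 : (s1 ++ t1)[s1.length]? = some a := by
    rw [List.getElem?_append_right (le_refl _)]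
    simp [hat]
  have h2 : (s2 ++ t2)[s1.length]? = some (s2[s1.length]) := by
    rw [List.getElem?_append_left hlen]
    exact List.getElem?_eq_getElem hlen
  rw [h] at h1
  rw [h1] at h2
  have h3 : a = s2[s1.length] := by simpa using h2
  have := hs2 s1.length hlen hn1
  omega

lemma stream_head (l : List {x : ℕ // 1 ≤ x}) :
    (l.map (fun x => encCB x.val)).flatten = [] ∨
      128 ≤ ((l.map (fun x => encCB x.val)).flatten).headI := by
  cases l with
  | nil => left; simp
  | cons a l =>
    right
    obtain ⟨c, cs, henc, hc, _⟩ := encCB_spec a.val a.prop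
    simp [henc]
    omega

lemma key : ∀ (l m : List {x : ℕ // 1 ≤ x}),
    (l.map (fun x => encCB x.val)).flatten = (m.map (fun x => encCB x.val)).flatten → l = m := by
  intro l
  induction l with
  | nil =>
    intro m h
    cases m with
    | nil => rfl
    | cons b m =>
      exfalso
      obtain ⟨c, cs, henc, _, _⟩ := encCB_spec b.val b.prop
      simp [henc] at h
  | cons a l ih =>
    intro m h
    cases m with
    | nil =>
      exfalso
      obtain ⟨c, cs, henc, _, _⟩ := encCB_spec a.val a.prop
      simp [henc] at h
    | cons b m =>
      simp only [List.map_cons, List.flatten_cons] at h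
      obtain ⟨c1, cs1, henc1, hc1, hcs1⟩ := encCB_spec a.val a.prop
      obtain ⟨c2, cs2, henc2, hc2, hcs2⟩ := encCB_spec b.val b.prop
      have htail2 : ∀ i (hi : i < (encCB b.val).length), 1 ≤ i → (encCB b.val)[i] < 128 := by
        intro i hi h1
        cases i with
        | zero => omega
        | succ j =>
          rw [List.getElem_of_eq henc2 hi]
          simp only [List.getElem_cons_succ]
          exact hcs2 _ (List.getElem_mem _)
      have htail1 : ∀ i (hi : i < (encCB a.val).length), 1 ≤ i → (encCB a.val)[i] < 128 := by
        intro i hi h1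
        cases i with
        | zero => omega
        | succ j =>
          rw [List.getElem_of_eq henc1 hi]
          simp only [List.getElem_cons_succ]
          exact hcs1 _ (List.getElem_mem _)
      have hne1 : encCB a.val ≠ [] := by rw [henc1]; simp
      have hne2 : encCB b.val ≠ [] := by rw [henc2]; simp
      have hlen : (encCB a.val).length = (encCB b.val).length := by
        rcases lt_trichotomy (encCB a.val).length (encCB b.val).length with hl | hl | hl
        · exact absurd hl (fun hl => no_shorter _ _ _ _ h hl hne1 htail2 (stream_head l))
        · exact hl
        · exact absurd hl (fun hl => no_shorter _ _ _ _ h.symm hl hne2 htail1 (stream_head m))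
      obtain ⟨heq, htl⟩ := List.append_inj h hlen
      have : a = b := Subtype.ext (encCB_inj a.prop b.prop heq)
      rw [this, ih m htl]

/-- **Unique decodability of the continuation-bit code on streams.**
The map sending a list `l` of positive integers to the concatenation of the
continuation-bit codes of its elements is injective. -/
theorem stmt17 :
    Function.Injective
      (fun l : List {x : ℕ // 1 ≤ x} => (l.map (fun x => encCB x.val)).flatten) := by
  intro l m h
  exact key l m h
end
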